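/- arXiv:2409.04589 — 2 statements merged into one kernel-verified Lean document; each statement's English description precedes it below -/
import Mathlib

section
/- (Validity of the multilayered bounds for stayers.) Under the multilayered sample selection model with Assumption RCT, let R be a collection of constraints on response-type probability vectors, and suppose the true vector (P(T=(d,d')))_{(d,d')} belongs to Θ_I(R). Fix d ∈ {1,…,K} with P(T=(d,d)) > 0, P(D=d | Z=1) > 0, P(D=d | Z=0) > 0, and suppose γ̲^{1,r}_{(d,d)} > 0 and γ̲^{0,r}_{(d,d)} > 0. Let F_{Y|D=d,Z=z} denote the conditional CDF of Y given {D=d, Z=z}. Then: E[F^{-1}_{Y|D=d,Z=1}(U) | U ≤ γ̲^{1,r}_{(d,d)}] − E[F^{-1}_{Y|D=d,Z=0}(U) | U ≥ 1 − γ̲^{0,r}_{(d,d)}] ≤ LCDE(d | (d,d)) ≤ E[F^{-1}_{Y|D=d,Z=1}(U) | U ≥ 1 − γ̲^{1,r}_{(d,d)}] − E[F^{-1}_{Y|D=d,Z=0}(U) | U ≤ γ̲^{0,r}_{(d,d)}]. -/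
open MeasureTheory ProbabilityTheory

/-- Realized layer `D = D_1·Z + D_0·(1−Z)` (for `Z` valued in `{0,1}`). -/
def Dreal {Ω : Type*} (Z D0 D1 : Ω → ℕ) (ω : Ω) : ℕ :=
  D1 ω * Z ω + D0 ω * (1 - Z ω)

/-- Realized outcome `Y = Σ_{d=1}^K [Y_{1,d}·Z + Y_{0,d}·(1−Z)]·1{D=d}`. -/
noncomputable def Yreal {Ω : Type*} (K : ℕ) (Z D0 D1 : Ω → ℕ) (Y : ℕ → ℕ → Ω → ℝ)
    (ω : Ω) : ℝ :=
  ∑ d ∈ Finset.Icc 1 K,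
    (Y 1 d ω * (Z ω : ℝ) + Y 0 d ω * (1 - (Z ω : ℝ))) *
      (if Dreal Z D0 D1 ω = d then 1 else 0)

/-- Assumption RCT: the σ-algebra generated by the potential outcomes
`Y_{z,d}` (for `z ∈ {0,1}`, `d ∈ {1,…,K}`) together with `D_0, D_1` is
independent of (the σ-algebra generated by) `Z`. -/
def RCT {Ω : Type*} [MeasurableSpace Ω] (P : MeasureTheory.Measure Ω) (K : ℕ)
    (Y : ℕ → ℕ → Ω → ℝ) (D0 D1 Z : Ω → ℕ) : Prop :=
  ProbabilityTheory.Indep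
    ((⨆ z ∈ ({0, 1} : Set ℕ), ⨆ d ∈ Set.Icc 1 K, MeasurableSpace.comap (Y z d) inferInstance)
      ⊔ MeasurableSpace.comap D0 inferInstance ⊔ MeasurableSpace.comap D1 inferInstance)
    (MeasurableSpace.comap Z inferInstance) P

/-- CDF of a random variable `W` under a measure `μ`. -/
noncomputable def cdfOf {Ω : Type*} [MeasurableSpace Ω] (μ : MeasureTheory.Measure Ω)
    (W : Ω → ℝ) (w : ℝ) : ℝ :=
  (μ {ω | W ω ≤ w}).toReal

/-- Quantile function `F⁻¹(u) = inf {w : F(w) ≥ u}`. -/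
noncomputable def quantileFn (F : ℝ → ℝ) (u : ℝ) : ℝ := sInf {w | u ≤ F w}

/-- Lower truncated mean `E[F⁻¹(U) | U ≤ γ]` for `U` uniform on `[0,1]`,
written as `γ⁻¹ ∫_{(0,γ]} F⁻¹(u) du`. -/
noncomputable def lowerTrunc (F : ℝ → ℝ) (γ : ℝ) : ℝ :=
  γ⁻¹ * ∫ u in Set.Ioc (0 : ℝ) γ, quantileFn F u

/-- Upper truncated mean `E[F⁻¹(U) | U ≥ 1 − γ]` for `U` uniform on `[0,1]`,
written as `γ⁻¹ ∫_{[1−γ,1]} F⁻¹(u) du`. -/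
noncomputable def upperTrunc (F : ℝ → ℝ) (γ : ℝ) : ℝ :=
  γ⁻¹ * ∫ u in Set.Ico (1 - γ) (1 : ℝ), quantileFn F u

/-- Propensity score `P(D = d | Z = z)` as a real number. -/
noncomputable def propScore {Ω : Type*} [MeasurableSpace Ω] (P : MeasureTheory.Measure Ω)
    (Z D0 D1 : Ω → ℕ) (d z : ℕ) : ℝ :=
  ((P[|{ω | Z ω = z}]) {ω | Dreal Z D0 D1 ω = d}).toReal

/-- Identified set `Θ_I(R)` of response-type probability vectors: nonnegative
vectors on `{0,…,K}²` summing to one, matching both propensity-score margins,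
and satisfying the restrictions `R`. -/
def ThetaI {Ω : Type*} [MeasurableSpace Ω] (P : MeasureTheory.Measure Ω) (K : ℕ)
    (Z D0 D1 : Ω → ℕ) (R : (ℕ × ℕ → ℝ) → Prop) : Set (ℕ × ℕ → ℝ) :=
  {p | (∀ t ∈ Finset.range (K + 1) ×ˢ Finset.range (K + 1), 0 ≤ p t) ∧
       (∑ t ∈ Finset.range (K + 1) ×ˢ Finset.range (K + 1), p t = 1) ∧
       (∀ d ≤ K, propScore P Z D0 D1 d 1 = ∑ d' ∈ Finset.range (K + 1), p (d', d)) ∧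
       (∀ d ≤ K, propScore P Z D0 D1 d 0 = ∑ d' ∈ Finset.range (K + 1), p (d, d')) ∧
       R p}

/-- `p̲^r_t`: the infimum of `p t` over the identified set `Θ_I(R)`. -/
noncomputable def pbar {Ω : Type*} [MeasurableSpace Ω] (P : MeasureTheory.Measure Ω)
    (K : ℕ) (Z D0 D1 : Ω → ℕ) (R : (ℕ × ℕ → ℝ) → Prop) (t : ℕ × ℕ) : ℝ :=
  sInf ((fun p => p t) '' ThetaI P K Z D0 D1 R)

/-- The conditional CDF `F_{Y|D=d,Z=z}` of the realized outcome. -/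
noncomputable def FYcond {Ω : Type*} [MeasurableSpace Ω] (P : MeasureTheory.Measure Ω)
    (K : ℕ) (Z D0 D1 : Ω → ℕ) (Y : ℕ → ℕ → Ω → ℝ) (d z : ℕ) : ℝ → ℝ :=
  cdfOf (P[|{ω | Dreal Z D0 D1 ω = d ∧ Z ω = z}]) (Yreal K Z D0 D1 Y)


open scoped ENNReal
set_option linter.unusedSectionVars false
set_option linter.deprecated false
set_option linter.unusedVariables false
set_option maxHeartbeats 1000000

open Set

section CDF

variable {Ω : Type*} [MeasurableSpace Ω] (η : Measure Ω) [IsProbabilityMeasure η]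
  (W : Ω → ℝ) (hW : Measurable W)
include hW

lemma cdf_nonneg (w : ℝ) : 0 ≤ cdfOf η W w := ENNReal.toReal_nonneg

lemma cdf_le_one (w : ℝ) : cdfOf η W w ≤ 1 := by
  have := prob_le_one (μ := η) (s := {ω | W ω ≤ w})
  simpa [cdfOf] using ENNReal.toReal_mono (by simp) this

lemma cdf_mono : Monotone (cdfOf η W) := by
  intro a b hab
  refine ENNReal.toReal_mono (measure_ne_top _ _) (measure_mono ?_)
  intro ω hω; exact le_trans hω hab

lemma cdf_ofReal (w : ℝ) : ENNReal.ofReal (cdfOf η W w) = η {ω | W ω ≤ w} :=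
  ENNReal.ofReal_toReal (measure_ne_top _ _)

lemma cdf_tendsto_rc (w : ℝ) :
    Filter.Tendsto (fun n : ℕ => cdfOf η W (w + (n + 1 : ℝ)⁻¹)) Filter.atTop
      (nhds (cdfOf η W w)) := by
  have hmeas : ∀ n : ℕ, MeasurableSet {ω | W ω ≤ w + ((n : ℝ) + 1)⁻¹} := fun n =>
    hW measurableSet_Iic
  have hanti : Antitone fun n : ℕ => {ω | W ω ≤ w + ((n : ℝ) + 1)⁻¹} := by
    intro m n hmn ω hω
    simp only [Set.mem_setOf_eq] at *
    have : ((n : ℝ) + 1)⁻¹ ≤ ((m : ℝ) + 1)⁻¹ := by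
      apply inv_anti₀ (by positivity) (by exact_mod_cast Nat.succ_le_succ hmn)
    linarith
  have hint : (⋂ n : ℕ, {ω | W ω ≤ w + ((n : ℝ) + 1)⁻¹}) = {ω | W ω ≤ w} := by
    ext ω
    simp only [Set.mem_iInter, Set.mem_setOf_eq]
    constructor
    · intro h
      by_contra hlt
      push_neg at hlt
      obtain ⟨n, hn⟩ := exists_nat_gt (W ω - w)⁻¹
      have h1 : (0:ℝ) < W ω - w := by linarith
      have := h n
      have h2 : ((n:ℝ)+1)⁻¹ < W ω - w := by
        rw [inv_lt_comm₀ (by positivity) h1]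
        calc (W ω - w)⁻¹ < n := hn
        _ < n + 1 := by linarith
      linarith
    · intro h n
      have : (0:ℝ) < ((n:ℝ)+1)⁻¹ := by positivity
      linarith
  have := tendsto_measure_iInter_atTop (μ := η)
    (fun n => (hmeas n).nullMeasurableSet) hanti ⟨0, measure_ne_top _ _⟩
  rw [hint] at this
  have hcont := (ENNReal.tendsto_toReal (measure_ne_top η _)).comp this
  simpa [Function.comp_def, cdfOf] using hcont

lemma cdf_rc (w u : ℝ) (h : ∀ ε > 0, u ≤ cdfOf η W (w + ε)) : u ≤ cdfOf η W w := by
  refine ge_of_tendsto (cdf_tendsto_rc η W hW w) ?_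
  filter_upwards with n
  exact h _ (by positivity)

lemma cdf_exists_lt (u : ℝ) (hu : 0 < u) : ∃ x : ℝ, cdfOf η W x < u := by
  have hmeas : ∀ n : ℕ, MeasurableSet {ω | W ω ≤ -(n : ℝ)} := fun n => hW measurableSet_Iic
  have hanti : Antitone fun n : ℕ => {ω | W ω ≤ -(n : ℝ)} := by
    intro m n hmn ω hω
    simp only [Set.mem_setOf_eq] at *
    have : (m : ℝ) ≤ n := by exact_mod_cast hmn
    linarith
  have hint : (⋂ n : ℕ, {ω | W ω ≤ -(n : ℝ)}) = ∅ := by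
    ext ω
    simp only [Set.mem_iInter, Set.mem_setOf_eq, Set.mem_empty_iff_false, iff_false]
    push_neg
    obtain ⟨n, hn⟩ := exists_nat_gt (-(W ω))
    exact ⟨n, by linarith⟩
  have := tendsto_measure_iInter_atTop (μ := η)
    (fun n => (hmeas n).nullMeasurableSet) hanti ⟨0, measure_ne_top _ _⟩
  rw [hint] at this
  simp only [measure_empty] at this
  have hcont := (ENNReal.tendsto_toReal (by simp)).comp this
  simp only [ENNReal.toReal_zero] at hcont
  have := hcont.eventually_lt_const hu
  obtain ⟨n, hn⟩ := this.exists
  exact ⟨-(n : ℝ), hn⟩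

lemma cdf_exists_ge (u : ℝ) (hu : u < 1) : ∃ x : ℝ, u ≤ cdfOf η W x := by
  have hmeas : ∀ n : ℕ, MeasurableSet {ω | W ω ≤ (n : ℝ)} := fun n => hW measurableSet_Iic
  have hmono : Monotone fun n : ℕ => {ω | W ω ≤ (n : ℝ)} := by
    intro m n hmn ω hω
    simp only [Set.mem_setOf_eq] at *
    have : (m : ℝ) ≤ n := by exact_mod_cast hmn
    linarith
  have hun : (⋃ n : ℕ, {ω | W ω ≤ (n : ℝ)}) = Set.univ := by
    ext ω
    simp only [Set.mem_iUnion, Set.mem_setOf_eq, Set.mem_univ, iff_true]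
    obtain ⟨n, hn⟩ := exists_nat_gt (W ω)
    exact ⟨n, hn.le⟩
  have := tendsto_measure_iUnion_atTop (μ := η) hmono
  rw [hun] at this
  simp only [measure_univ] at this
  have hcont := (ENNReal.tendsto_toReal (by simp : (1:ℝ≥0∞) ≠ ⊤)).comp this
  simp only [ENNReal.toReal_one] at hcont
  have := hcont.eventually_const_lt hu
  obtain ⟨n, hn⟩ := this.exists
  exact ⟨(n : ℝ), hn.le⟩

lemma cdf_bddBelow (u : ℝ) (hu : 0 < u) : BddBelow {w | u ≤ cdfOf η W w} := by
  obtain ⟨x, hx⟩ := cdf_exists_lt η W hW u hu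
  refine ⟨x, fun v hv => ?_⟩
  by_contra hlt
  push_neg at hlt
  exact absurd (le_trans hv (cdf_mono η W hW hlt.le)) (not_le.2 hx)

lemma cdf_set_nonempty (u : ℝ) (hu : u < 1) : {w | u ≤ cdfOf η W w}.Nonempty :=
  cdf_exists_ge η W hW u hu

lemma quantile_le_of (u w : ℝ) (hu : 0 < u) (h : u ≤ cdfOf η W w) :
    quantileFn (cdfOf η W) u ≤ w :=
  csInf_le (cdf_bddBelow η W hW u hu) h

lemma cdf_lt_of_lt_quantile (u w : ℝ) (hu : 0 < u)
    (h : w < quantileFn (cdfOf η W) u) : cdfOf η W w < u := by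
  by_contra hle
  push_neg at hle
  exact absurd (quantile_le_of η W hW u w hu hle) (not_le.2 h)

lemma le_cdf_of_quantile_le (u w : ℝ) (hu : 0 < u) (hu1 : u < 1)
    (h : quantileFn (cdfOf η W) u ≤ w) : u ≤ cdfOf η W w := by
  apply cdf_rc η W hW
  intro ε hε
  have hne := cdf_set_nonempty η W hW u hu1
  have hbdd := cdf_bddBelow η W hW u hu
  have : sInf {v | u ≤ cdfOf η W v} < w + ε := lt_of_le_of_lt h (by linarith)
  obtain ⟨v, hv, hvlt⟩ := (csInf_lt_iff hbdd hne).mp this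
  exact le_trans hv (cdf_mono η W hW hvlt.le)

lemma quantile_le_iff (u w : ℝ) (hu : 0 < u) (hu1 : u < 1) :
    quantileFn (cdfOf η W) u ≤ w ↔ u ≤ cdfOf η W w :=
  ⟨le_cdf_of_quantile_le η W hW u w hu hu1, quantile_le_of η W hW u w hu⟩

lemma le_cdf_quantile (u : ℝ) (hu : 0 < u) (hu1 : u < 1) :
    u ≤ cdfOf η W (quantileFn (cdfOf η W) u) :=
  le_cdf_of_quantile_le η W hW u _ hu hu1 le_rfl

lemma quantile_monoOn : MonotoneOn (quantileFn (cdfOf η W)) (Set.Ioo 0 1) := by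
  intro u hu v hv huv
  exact quantile_le_of η W hW u _ hu.1
    (le_trans huv (le_cdf_quantile η W hW v hv.1 hv.2))

lemma cdf_left_tendsto (x : ℝ) :
    Filter.Tendsto (fun n : ℕ => cdfOf η W (x - ((n : ℝ) + 1)⁻¹)) Filter.atTop
      (nhds ((η {ω | W ω < x}).toReal)) := by
  have hmono : Monotone fun n : ℕ => {ω | W ω ≤ x - ((n : ℝ) + 1)⁻¹} := by
    intro m n hmn ω hω
    simp only [Set.mem_setOf_eq] at *
    have : ((n : ℝ) + 1)⁻¹ ≤ ((m : ℝ) + 1)⁻¹ := by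
      apply inv_anti₀ (by positivity) (by exact_mod_cast Nat.succ_le_succ hmn)
    linarith
  have hun : (⋃ n : ℕ, {ω | W ω ≤ x - ((n : ℝ) + 1)⁻¹}) = {ω | W ω < x} := by
    ext ω
    simp only [Set.mem_iUnion, Set.mem_setOf_eq]
    constructor
    · rintro ⟨n, hn⟩
      have : (0:ℝ) < ((n:ℝ)+1)⁻¹ := by positivity
      linarith
    · intro h
      obtain ⟨n, hn⟩ := exists_nat_gt (x - W ω)⁻¹
      refine ⟨n, ?_⟩
      have h1 : (0:ℝ) < x - W ω := by linarith
      have h2 : ((n:ℝ)+1)⁻¹ < x - W ω := by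
        rw [inv_lt_comm₀ (by positivity) h1]
        calc (x - W ω)⁻¹ < n := hn
        _ < n + 1 := by linarith
      linarith
  have := tendsto_measure_iUnion_atTop (μ := η) hmono
  rw [hun] at this
  exact (ENNReal.tendsto_toReal (measure_ne_top η _)).comp this

end CDF

section Identities

variable {Ω : Type*} [MeasurableSpace Ω] (η : Measure Ω) [IsProbabilityMeasure η]
  (W : Ω → ℝ) (hW : Measurable W) (hWi : Integrable W η)
include hW hWi

lemma lower_identity (γ : ℝ) (h0 : 0 < γ) (h1 : γ < 1) :
    IntegrableOn (quantileFn (cdfOf η W)) (Ioc 0 γ) volume ∧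
    ∫ u in Ioc 0 γ, quantileFn (cdfOf η W) u
      = γ * quantileFn (cdfOf η W) γ
        - ∫ ω, max (quantileFn (cdfOf η W) γ - W ω) 0 ∂η := by
  set F := cdfOf η W with hF
  set q := quantileFn F with hq
  set c := q γ with hc
  have hIoosub : Ioc (0:ℝ) γ ⊆ Ioo 0 1 := fun u hu => ⟨hu.1, lt_of_le_of_lt hu.2 h1⟩
  have hqc : ∀ u ∈ Ioc (0:ℝ) γ, q u ≤ c := fun u hu =>
    quantile_monoOn η W hW (hIoosub hu) ⟨h0, h1⟩ hu.2
  -- measurability of q on the interval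
  have hqm : AEMeasurable q (volume.restrict (Ioc (0:ℝ) γ)) :=
    aemeasurable_restrict_of_monotoneOn measurableSet_Ioc
      ((quantile_monoOn η W hW).mono hIoosub)
  set f : ℝ → ℝ := fun u => c - q u with hfdef
  have f_mble : AEMeasurable f (volume.restrict (Ioc (0:ℝ) γ)) := aemeasurable_const.sub hqm
  have f_nn : 0 ≤ᵐ[volume.restrict (Ioc (0:ℝ) γ)] f :=
    (ae_restrict_mem measurableSet_Ioc).mono fun u hu => sub_nonneg.2 (hqc u hu)
  set g : Ω → ℝ := fun ω => max (c - W ω) 0 with hgdef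
  have hgint : Integrable g η := ((integrable_const c).sub hWi).pos_part
  have g_mble : AEMeasurable g η := ((measurable_const.sub hW).max measurable_const).aemeasurable
  have g_nn : 0 ≤ᵐ[η] g := Filter.Eventually.of_forall fun ω => le_max_right _ 0
  -- per-t sets
  have hFlt : F (c - γ) < γ → True := fun _ => trivial
  have perT : ∀ t ∈ Ioi (0:ℝ),
      (volume.restrict (Ioc (0:ℝ) γ)) {u | t ≤ f u} = η {ω | t ≤ g ω} := by
    intro t ht
    have ht' : (0:ℝ) < t := ht
    have hFct : F (c - t) < γ :=
      cdf_lt_of_lt_quantile η W hW γ (c - t) h0 (by simp [hc]; linarith)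
    have hset : {u : ℝ | t ≤ f u} ∩ Ioc 0 γ = Ioc 0 (F (c - t)) := by
      ext u
      simp only [Set.mem_inter_iff, Set.mem_setOf_eq, Set.mem_Ioc, hfdef]
      constructor
      · rintro ⟨h1', h2', h3'⟩
        exact ⟨h2', le_cdf_of_quantile_le η W hW u (c - t) h2'
          (lt_of_le_of_lt h3' h1) (by linarith)⟩
      · rintro ⟨h1', h2'⟩
        have hqle : q u ≤ c - t := quantile_le_of η W hW u (c - t) h1' h2'
        exact ⟨by linarith, h1', by linarith [hFct.le.trans (le_refl γ), h2'.trans hFct.le]⟩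
    have hgset : {ω | t ≤ g ω} = {ω | W ω ≤ c - t} := by
      ext ω
      simp only [Set.mem_setOf_eq, hgdef, le_max_iff]
      constructor
      · rintro (h | h)
        · linarith
        · linarith
      · intro h
        left
        linarith
    rw [Measure.restrict_apply' measurableSet_Ioc, hset, hgset, Real.volume_Ioc,
      ← cdf_ofReal η W hW (c - t)]
    simp [hF]
  -- layer cake on both sides
  have lhs_eq := lintegral_eq_lintegral_meas_le (volume.restrict (Ioc (0:ℝ) γ)) f_nn f_mble
  have rhs_eq := lintegral_eq_lintegral_meas_le η g_nn g_mble
  have hmid : ∫⁻ t in Ioi (0:ℝ), (volume.restrict (Ioc (0:ℝ) γ)) {u | t ≤ f u}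
      = ∫⁻ t in Ioi (0:ℝ), η {ω | t ≤ g ω} :=
    setLIntegral_congr_fun measurableSet_Ioi
      (fun t ht => perT t ht)
  have key : ∫⁻ u in Ioc (0:ℝ) γ, ENNReal.ofReal (f u)
      = ∫⁻ ω, ENNReal.ofReal (g ω) ∂η := by rw [lhs_eq, hmid, ← rhs_eq]
  -- integrability of f
  have hgl : ENNReal.ofReal (∫ ω, g ω ∂η) = ∫⁻ ω, ENNReal.ofReal (g ω) ∂η :=
    ofReal_integral_eq_lintegral_ofReal hgint g_nn
  have hfint : Integrable f (volume.restrict (Ioc (0:ℝ) γ)) := by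
    refine ⟨f_mble.aestronglyMeasurable, ?_⟩
    rw [hasFiniteIntegral_iff_ofReal f_nn, key, ← hgl]
    exact ENNReal.ofReal_lt_top
  have hfl : ENNReal.ofReal (∫ u in Ioc (0:ℝ) γ, f u) = ∫⁻ u in Ioc (0:ℝ) γ, ENNReal.ofReal (f u) :=
    ofReal_integral_eq_lintegral_ofReal hfint f_nn
  have hint_eq : ∫ u in Ioc (0:ℝ) γ, f u = ∫ ω, g ω ∂η := by
    have h1' : (0:ℝ) ≤ ∫ u in Ioc (0:ℝ) γ, f u := integral_nonneg_of_ae f_nn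
    have h2' : (0:ℝ) ≤ ∫ ω, g ω ∂η := integral_nonneg_of_ae g_nn
    have := hfl.trans (key.trans hgl.symm)
    exact (ENNReal.ofReal_eq_ofReal_iff h1' h2').mp this
  -- conclude
  have hqint : IntegrableOn q (Ioc (0:ℝ) γ) volume := by
    have : Integrable (fun u => c - f u) (volume.restrict (Ioc (0:ℝ) γ)) :=
      (integrable_const c).sub hfint
    simpa [hfdef, IntegrableOn] using this
  refine ⟨hqint, ?_⟩
  have hsplit : ∫ u in Ioc (0:ℝ) γ, q u = ∫ u in Ioc (0:ℝ) γ, (c - f u) := by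
    apply integral_congr_ae
    exact Filter.Eventually.of_forall fun u => by simp [hfdef]
  rw [hsplit, integral_sub (integrable_const c) hfint, hint_eq]
  simp [Real.volume_Ioc, ENNReal.toReal_ofReal h0.le, mul_comm, max_eq_left h0.le]

lemma upper_identity (γ : ℝ) (h0 : 0 < γ) (h1 : γ < 1) :
    IntegrableOn (quantileFn (cdfOf η W)) (Ico (1 - γ) 1) volume ∧
    ∫ u in Ico (1 - γ) (1:ℝ), quantileFn (cdfOf η W) u
      = γ * quantileFn (cdfOf η W) (1 - γ)
        + ∫ ω, max (W ω - quantileFn (cdfOf η W) (1 - γ)) 0 ∂η := by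
  set F := cdfOf η W with hF
  set q := quantileFn F with hq
  set c := q (1 - γ) with hc
  have h1γ : (0:ℝ) < 1 - γ := by linarith
  have h1γ' : (1:ℝ) - γ < 1 := by linarith
  have hIcosub : Ico (1 - γ) (1:ℝ) ⊆ Ioo 0 1 := fun u hu => ⟨lt_of_lt_of_le h1γ hu.1, hu.2⟩
  have hqc : ∀ u ∈ Ico (1 - γ) (1:ℝ), c ≤ q u := fun u hu =>
    quantile_monoOn η W hW ⟨h1γ, h1γ'⟩ (hIcosub hu) hu.1
  have hqm : AEMeasurable q (volume.restrict (Ico (1 - γ) (1:ℝ))) :=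
    aemeasurable_restrict_of_monotoneOn measurableSet_Ico
      ((quantile_monoOn η W hW).mono hIcosub)
  set f : ℝ → ℝ := fun u => q u - c with hfdef
  have f_mble : AEMeasurable f (volume.restrict (Ico (1 - γ) (1:ℝ))) := hqm.sub aemeasurable_const
  have f_nn : 0 ≤ᵐ[volume.restrict (Ico (1 - γ) (1:ℝ))] f :=
    (ae_restrict_mem measurableSet_Ico).mono fun u hu => sub_nonneg.2 (hqc u hu)
  set g : Ω → ℝ := fun ω => max (W ω - c) 0 with hgdef
  have hgint : Integrable g η := (hWi.sub (integrable_const c)).pos_part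
  have g_mble : AEMeasurable g η := ((hW.sub measurable_const).max measurable_const).aemeasurable
  have g_nn : 0 ≤ᵐ[η] g := Filter.Eventually.of_forall fun ω => le_max_right _ 0
  have perT : ∀ t ∈ Ioi (0:ℝ),
      (volume.restrict (Ico (1 - γ) (1:ℝ))) {u | t ≤ f u} = η {ω | t ≤ g ω} := by
    intro t ht
    have ht' : (0:ℝ) < t := ht
    set x := c + t with hx
    set L := (η {ω | W ω < x}).toReal with hL
    have hLx : ∀ w, w < x → F w ≤ L := by
      intro w hw
      refine ENNReal.toReal_mono (measure_ne_top _ _) (measure_mono ?_)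
      intro ω hω
      exact lt_of_le_of_lt hω hw
    have hL1γ : 1 - γ ≤ L :=
      le_trans (le_cdf_quantile η W hW (1 - γ) h1γ h1γ') (hLx c (by linarith))
    have hL1 : L ≤ 1 := by
      have := prob_le_one (μ := η) (s := {ω | W ω < x})
      simpa using ENNReal.toReal_mono (by simp) this
    have hLle : ∀ u, (∀ w, w < x → F w < u) → L ≤ u := by
      intro u hu
      refine le_of_tendsto (cdf_left_tendsto η W hW x) ?_
      filter_upwards with n
      have hp : (0:ℝ) < ((n:ℝ)+1)⁻¹ := by positivity
      exact (hu _ (by linarith)).le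
    have hiff : ∀ u ∈ Ico (1 - γ) (1:ℝ), (t ≤ f u ↔ ∀ w, w < x → F w < u) := by
      intro u hu
      have hu0 : (0:ℝ) < u := (hIcosub hu).1
      have hu1 : u < 1 := hu.2
      constructor
      · intro h w hwx
        exact cdf_lt_of_lt_quantile η W hW u w hu0 (by simp only [hfdef] at h; linarith)
      · intro h
        have hxq : x ≤ q u := by
          refine le_csInf (cdf_set_nonempty η W hW u hu1) ?_
          intro v hv
          by_contra hlt
          push_neg at hlt
          exact absurd hv (not_le.2 (h v hlt))
        simp only [hfdef]
        linarith
    have hsub1 : Ioo L 1 ⊆ {u | t ≤ f u} ∩ Ico (1 - γ) (1:ℝ) := by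
      intro u hu
      have huI : u ∈ Ico (1 - γ) (1:ℝ) := ⟨by linarith [hu.1], hu.2⟩
      refine ⟨(hiff u huI).mpr fun w hw => lt_of_le_of_lt (hLx w hw) hu.1, huI⟩
    have hsub2 : {u | t ≤ f u} ∩ Ico (1 - γ) (1:ℝ) ⊆ Ico L 1 := by
      rintro u ⟨hf', huI⟩
      exact ⟨hLle u ((hiff u huI).mp hf'), huI.2⟩
    have hvol : (volume.restrict (Ico (1 - γ) (1:ℝ))) {u | t ≤ f u}
        = ENNReal.ofReal (1 - L) := by
      rw [Measure.restrict_apply' measurableSet_Ico]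
      refine le_antisymm ?_ ?_
      · calc volume ({u | t ≤ f u} ∩ Ico (1 - γ) (1:ℝ)) ≤ volume (Ico L 1) :=
          measure_mono hsub2
        _ = ENNReal.ofReal (1 - L) := Real.volume_Ico
      · calc ENNReal.ofReal (1 - L) = volume (Ioo L 1) := Real.volume_Ioo.symm
        _ ≤ volume ({u | t ≤ f u} ∩ Ico (1 - γ) (1:ℝ)) := measure_mono hsub1
    have hgmeas : η {ω | t ≤ g ω} = ENNReal.ofReal (1 - L) := by
      have hgset : {ω | t ≤ g ω} = {ω | W ω < x}ᶜ := by
        ext ω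
        simp only [Set.mem_setOf_eq, hgdef, le_max_iff, Set.mem_compl_iff, not_lt, hx]
        constructor
        · rintro (h | h)
          · linarith
          · linarith
        · intro h
          left
          linarith
      have hms : MeasurableSet {ω | W ω < x} := hW measurableSet_Iio
      rw [hgset, prob_compl_eq_one_sub hms]
      rw [ENNReal.ofReal_sub _ ENNReal.toReal_nonneg, ENNReal.ofReal_one,
        ENNReal.ofReal_toReal (measure_ne_top _ _)]
    rw [hvol, hgmeas]
  have lhs_eq := lintegral_eq_lintegral_meas_le (volume.restrict (Ico (1 - γ) (1:ℝ))) f_nn f_mble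
  have rhs_eq := lintegral_eq_lintegral_meas_le η g_nn g_mble
  have hmid : ∫⁻ t in Ioi (0:ℝ), (volume.restrict (Ico (1 - γ) (1:ℝ))) {u | t ≤ f u}
      = ∫⁻ t in Ioi (0:ℝ), η {ω | t ≤ g ω} :=
    setLIntegral_congr_fun measurableSet_Ioi
      (fun t ht => perT t ht)
  have key : ∫⁻ u in Ico (1 - γ) (1:ℝ), ENNReal.ofReal (f u)
      = ∫⁻ ω, ENNReal.ofReal (g ω) ∂η := by rw [lhs_eq, hmid, ← rhs_eq]
  have hgl : ENNReal.ofReal (∫ ω, g ω ∂η) = ∫⁻ ω, ENNReal.ofReal (g ω) ∂η :=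
    ofReal_integral_eq_lintegral_ofReal hgint g_nn
  have hfint : Integrable f (volume.restrict (Ico (1 - γ) (1:ℝ))) := by
    refine ⟨f_mble.aestronglyMeasurable, ?_⟩
    rw [hasFiniteIntegral_iff_ofReal f_nn, key, ← hgl]
    exact ENNReal.ofReal_lt_top
  have hfl : ENNReal.ofReal (∫ u in Ico (1 - γ) (1:ℝ), f u)
      = ∫⁻ u in Ico (1 - γ) (1:ℝ), ENNReal.ofReal (f u) :=
    ofReal_integral_eq_lintegral_ofReal hfint f_nn
  have hint_eq : ∫ u in Ico (1 - γ) (1:ℝ), f u = ∫ ω, g ω ∂η := by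
    have h1' : (0:ℝ) ≤ ∫ u in Ico (1 - γ) (1:ℝ), f u := integral_nonneg_of_ae f_nn
    have h2' : (0:ℝ) ≤ ∫ ω, g ω ∂η := integral_nonneg_of_ae g_nn
    exact (ENNReal.ofReal_eq_ofReal_iff h1' h2').mp (hfl.trans (key.trans hgl.symm))
  have hqint : IntegrableOn q (Ico (1 - γ) (1:ℝ)) volume := by
    have : Integrable (fun u => f u + c) (volume.restrict (Ico (1 - γ) (1:ℝ))) :=
      hfint.add (integrable_const c)
    simpa [hfdef, IntegrableOn] using this
  refine ⟨hqint, ?_⟩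
  have hsplit : ∫ u in Ico (1 - γ) (1:ℝ), q u = ∫ u in Ico (1 - γ) (1:ℝ), (f u + c) := by
    apply integral_congr_ae
    exact Filter.Eventually.of_forall fun u => by simp [hfdef]
  rw [hsplit, integral_add hfint (integrable_const c), hint_eq]
  have hvol' : (volume (Ico (1 - γ) (1:ℝ))).toReal = γ := by
    rw [Real.volume_Ico]
    rw [ENNReal.toReal_ofReal (by linarith)]
    ring
  rw [integral_const, measureReal_restrict_apply_univ, Measure.real, hvol', smul_eq_mul]
  ring

end Identities

section Trim

variable {Ω : Type*} [MeasurableSpace Ω] (η : Measure Ω) [IsProbabilityMeasure η]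
  (W : Ω → ℝ) (hW : Measurable W) (hWi : Integrable W η)
  (S : Set Ω) (hSm : MeasurableSet S)
include hW hWi hSm

omit hW hWi hSm in
lemma cond_integral' (hS0 : η S ≠ 0) :
    ∫ ω, W ω ∂(η[|S]) = (η S).toReal⁻¹ * ∫ ω in S, W ω ∂η := by
  rw [ProbabilityTheory.cond, integral_smul_measure, ENNReal.toReal_inv, smul_eq_mul]

lemma trim_lower_lt (γ : ℝ) (h0 : 0 < γ) (h1 : γ < 1) (hγs : γ ≤ (η S).toReal) :
    ∫ u in Ioc 0 γ, quantileFn (cdfOf η W) u ≤ γ * ∫ ω, W ω ∂(η[|S]) := by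
  set q := quantileFn (cdfOf η W) with hq
  set c := q γ with hc
  set s := (η S).toReal with hs
  have hs0 : 0 < s := lt_of_lt_of_le h0 hγs
  have hS0 : η S ≠ 0 := by
    intro h
    rw [hs, h] at hs0
    simp at hs0
  obtain ⟨hqint, hid⟩ := lower_identity η W hW hWi γ h0 h1
  set g : Ω → ℝ := fun ω => max (c - W ω) 0 with hgdef
  have hgint : Integrable g η := ((integrable_const c).sub hWi).pos_part
  have g_nn : 0 ≤ᵐ[η] g := Filter.Eventually.of_forall fun ω => le_max_right _ 0
  have hint_g_nn : (0:ℝ) ≤ ∫ ω, g ω ∂η := integral_nonneg_of_ae g_nn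
  -- bound the set integral from below
  have hSsub : ∫ ω in S, (c - W ω) ∂η ≤ ∫ ω, g ω ∂η := by
    calc ∫ ω in S, (c - W ω) ∂η ≤ ∫ ω in S, g ω ∂η := by
          refine setIntegral_mono_on ((integrable_const c).sub hWi).integrableOn
            hgint.integrableOn hSm ?_
          intro ω _
          exact le_max_left _ _
      _ ≤ ∫ ω, g ω ∂η := setIntegral_le_integral hgint g_nn
  have hSW : c * s - ∫ ω, g ω ∂η ≤ ∫ ω in S, W ω ∂η := by
    have hsubint : ∫ ω in S, (c - W ω) ∂η = c * s - ∫ ω in S, W ω ∂η := by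
      rw [integral_sub (integrableOn_const (C := c) (measure_ne_top η S)) hWi.integrableOn]
      rw [setIntegral_const, Measure.real, smul_eq_mul, hs]
      ring
    linarith [hSsub, hsubint]
  have hm : ∫ ω, W ω ∂(η[|S]) = s⁻¹ * ∫ ω in S, W ω ∂η := cond_integral' η W S hS0
  have hmge : c - γ⁻¹ * ∫ ω, g ω ∂η ≤ ∫ ω, W ω ∂(η[|S]) := by
    rw [hm]
    have h1' : s⁻¹ * (c * s - ∫ ω, g ω ∂η) ≤ s⁻¹ * ∫ ω in S, W ω ∂η :=
      mul_le_mul_of_nonneg_left hSW (by positivity)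
    have h2' : s⁻¹ * (c * s - ∫ ω, g ω ∂η) = c - s⁻¹ * ∫ ω, g ω ∂η := by
      field_simp
      try ring
    have h3' : s⁻¹ * ∫ ω, g ω ∂η ≤ γ⁻¹ * ∫ ω, g ω ∂η := by
      apply mul_le_mul_of_nonneg_right _ hint_g_nn
      exact inv_anti₀ h0 hγs
    linarith
  rw [hid]
  have := mul_le_mul_of_nonneg_left hmge h0.le
  calc γ * c - ∫ ω, g ω ∂η = γ * (c - γ⁻¹ * ∫ ω, g ω ∂η) := by
        field_simp
        try ring
    _ ≤ γ * ∫ ω, W ω ∂(η[|S]) := this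

lemma trim_upper_lt (γ : ℝ) (h0 : 0 < γ) (h1 : γ < 1) (hγs : γ ≤ (η S).toReal) :
    γ * ∫ ω, W ω ∂(η[|S]) ≤ ∫ u in Ico (1 - γ) (1:ℝ), quantileFn (cdfOf η W) u := by
  set q := quantileFn (cdfOf η W) with hq
  set c := q (1 - γ) with hc
  set s := (η S).toReal with hs
  have hs0 : 0 < s := lt_of_lt_of_le h0 hγs
  have hS0 : η S ≠ 0 := by
    intro h
    rw [hs, h] at hs0
    simp at hs0
  obtain ⟨hqint, hid⟩ := upper_identity η W hW hWi γ h0 h1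
  set g : Ω → ℝ := fun ω => max (W ω - c) 0 with hgdef
  have hgint : Integrable g η := (hWi.sub (integrable_const c)).pos_part
  have g_nn : 0 ≤ᵐ[η] g := Filter.Eventually.of_forall fun ω => le_max_right _ 0
  have hint_g_nn : (0:ℝ) ≤ ∫ ω, g ω ∂η := integral_nonneg_of_ae g_nn
  have hSsub : ∫ ω in S, (W ω - c) ∂η ≤ ∫ ω, g ω ∂η := by
    calc ∫ ω in S, (W ω - c) ∂η ≤ ∫ ω in S, g ω ∂η := by
          refine setIntegral_mono_on (hWi.sub (integrable_const c)).integrableOn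
            hgint.integrableOn hSm ?_
          intro ω _
          exact le_max_left _ _
      _ ≤ ∫ ω, g ω ∂η := setIntegral_le_integral hgint g_nn
  have hSW : ∫ ω in S, W ω ∂η ≤ c * s + ∫ ω, g ω ∂η := by
    have hsubint : ∫ ω in S, (W ω - c) ∂η = (∫ ω in S, W ω ∂η) - c * s := by
      rw [integral_sub hWi.integrableOn (integrableOn_const (C := c) (measure_ne_top η S))]
      rw [setIntegral_const, Measure.real, smul_eq_mul, hs]
      ring
    linarith [hSsub, hsubint]
  have hm : ∫ ω, W ω ∂(η[|S]) = s⁻¹ * ∫ ω in S, W ω ∂η := cond_integral' η W S hS0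
  have hmle : ∫ ω, W ω ∂(η[|S]) ≤ c + γ⁻¹ * ∫ ω, g ω ∂η := by
    rw [hm]
    have h1' : s⁻¹ * ∫ ω in S, W ω ∂η ≤ s⁻¹ * (c * s + ∫ ω, g ω ∂η) :=
      mul_le_mul_of_nonneg_left hSW (by positivity)
    have h2' : s⁻¹ * (c * s + ∫ ω, g ω ∂η) = c + s⁻¹ * ∫ ω, g ω ∂η := by
      field_simp
      try ring
    have h3' : s⁻¹ * ∫ ω, g ω ∂η ≤ γ⁻¹ * ∫ ω, g ω ∂η := by
      apply mul_le_mul_of_nonneg_right _ hint_g_nn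
      exact inv_anti₀ h0 hγs
    linarith
  rw [hid]
  have := mul_le_mul_of_nonneg_left hmle h0.le
  calc γ * ∫ ω, W ω ∂(η[|S]) ≤ γ * (c + γ⁻¹ * ∫ ω, g ω ∂η) := this
    _ = γ * c + ∫ ω, g ω ∂η := by
        field_simp
        try ring

end Trim

section Trim2

variable {Ω : Type*} [MeasurableSpace Ω] (η : Measure Ω) [IsProbabilityMeasure η]
  (W : Ω → ℝ) (hW : Measurable W) (hWi : Integrable W η)
  (S : Set Ω) (hSm : MeasurableSet S)
include hW hWi hSm

omit hW hWi hSm in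
lemma gamma_seq_pos (n : ℕ) : (0:ℝ) < 1 - ((n:ℝ)+2)⁻¹ := by
  have h2 : ((n:ℝ)+2)⁻¹ ≤ 2⁻¹ := by
    apply inv_anti₀ (by norm_num)
    have : (0:ℝ) ≤ n := Nat.cast_nonneg n
    linarith
  norm_num at h2 ⊢
  linarith

omit hW hWi hSm in
lemma gamma_seq_tendsto : Filter.Tendsto (fun n : ℕ => 1 - ((n:ℝ)+2)⁻¹)
    Filter.atTop (nhds 1) := by
  have h : Filter.Tendsto (fun n : ℕ => ((n:ℝ)+2)⁻¹) Filter.atTop (nhds 0) := by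
    apply Filter.Tendsto.comp tendsto_inv_atTop_zero
    apply Filter.tendsto_atTop_add_const_right
    exact tendsto_natCast_atTop_atTop
  have := (tendsto_const_nhds (x := (1:ℝ)) (f := Filter.atTop (α := ℕ))).sub h
  simpa using this

omit hSm in
lemma q_int_Ioo : IntegrableOn (quantileFn (cdfOf η W)) (Ioo (0:ℝ) 1) volume := by
  have h1 := (lower_identity η W hW hWi (1/2) (by norm_num) (by norm_num)).1
  have h2 := (upper_identity η W hW hWi (1/2) (by norm_num) (by norm_num)).1
  norm_num at h1 h2
  have := h1.union h2
  apply this.mono_set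
  intro u hu
  rcases le_or_gt u (1/2 : ℝ) with h | h
  · exact Or.inl ⟨hu.1, h⟩
  · exact Or.inr ⟨by norm_num; linarith, hu.2⟩

lemma trim_lower (γ : ℝ) (h0 : 0 < γ) (hγs : γ ≤ (η S).toReal) :
    γ⁻¹ * ∫ u in Ioc 0 γ, quantileFn (cdfOf η W) u ≤ ∫ ω, W ω ∂(η[|S]) := by
  set q := quantileFn (cdfOf η W) with hq
  set m := ∫ ω, W ω ∂(η[|S]) with hm
  have hs1 : (η S).toReal ≤ 1 := by
    have := prob_le_one (μ := η) (s := S)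
    simpa using ENNReal.toReal_mono (by simp) this
  rcases lt_or_ge γ 1 with h1 | h1
  · have := trim_lower_lt η W hW hWi S hSm γ h0 h1 hγs
    rw [inv_mul_le_iff₀ h0]
    have hcm : γ * ∫ ω, W ω ∂(η[|S]) = (∫ ω, W ω ∂(η[|S])) * γ := mul_comm _ _
    linarith [this]
  · have hγ1 : γ = 1 := le_antisymm (hγs.trans hs1) h1
    subst hγ1
    simp only [inv_one, one_mul]
    have hIoc : ∫ u in Ioc (0:ℝ) 1, q u = ∫ u in Ioo (0:ℝ) 1, q u :=
      (setIntegral_congr_set Ioo_ae_eq_Ioc).symm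
    rw [hIoc]
    have hun : (⋃ n : ℕ, Ioc (0:ℝ) (1 - ((n:ℝ)+2)⁻¹)) = Ioo 0 1 := by
      ext u
      simp only [Set.mem_iUnion, Set.mem_Ioc, Set.mem_Ioo]
      constructor
      · rintro ⟨n, hn1, hn2⟩
        have : (0:ℝ) < ((n:ℝ)+2)⁻¹ := by positivity
        exact ⟨hn1, by linarith⟩
      · rintro ⟨hu1, hu2⟩
        obtain ⟨n, hn⟩ := exists_nat_gt (1 - u)⁻¹
        refine ⟨n, hu1, ?_⟩
        have h1u : (0:ℝ) < 1 - u := by linarith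
        have : ((n:ℝ)+2)⁻¹ < 1 - u := by
          rw [inv_lt_comm₀ (by positivity) h1u]
          calc (1 - u)⁻¹ < n := hn
            _ < n + 2 := by linarith
        linarith
    have hmono : Monotone fun n : ℕ => Ioc (0:ℝ) (1 - ((n:ℝ)+2)⁻¹) := by
      intro a b hab u hu
      have : ((b:ℝ)+2)⁻¹ ≤ ((a:ℝ)+2)⁻¹ := by
        apply inv_anti₀ (by positivity) (by exact_mod_cast by omega)
      exact ⟨hu.1, hu.2.trans (by linarith)⟩
    have htend1 : Filter.Tendsto (fun n : ℕ => ∫ u in Ioc (0:ℝ) (1 - ((n:ℝ)+2)⁻¹), q u)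
        Filter.atTop (nhds (∫ u in Ioo (0:ℝ) 1, q u)) := by
      have := tendsto_setIntegral_of_monotone (μ := volume) (f := q)
        (fun n : ℕ => measurableSet_Ioc) hmono (by rw [hun]; exact q_int_Ioo η W hW hWi)
      rwa [hun] at this
    have htend2 : Filter.Tendsto (fun n : ℕ => (1 - ((n:ℝ)+2)⁻¹) * m)
        Filter.atTop (nhds m) := by
      have := gamma_seq_tendsto.mul_const m
      simpa using this
    refine le_of_tendsto_of_tendsto' htend1 htend2 fun n => ?_
    have hpos : (0:ℝ) < ((n:ℝ)+2)⁻¹ := by positivity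
    exact trim_lower_lt η W hW hWi S hSm _ (gamma_seq_pos n) (by linarith)
      (le_trans (by linarith) hγs)

lemma trim_upper (γ : ℝ) (h0 : 0 < γ) (hγs : γ ≤ (η S).toReal) :
    ∫ ω, W ω ∂(η[|S]) ≤ γ⁻¹ * ∫ u in Ico (1 - γ) (1:ℝ), quantileFn (cdfOf η W) u := by
  set q := quantileFn (cdfOf η W) with hq
  set m := ∫ ω, W ω ∂(η[|S]) with hm
  have hs1 : (η S).toReal ≤ 1 := by
    have := prob_le_one (μ := η) (s := S)
    simpa using ENNReal.toReal_mono (by simp) this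
  rcases lt_or_ge γ 1 with h1 | h1
  · have := trim_upper_lt η W hW hWi S hSm γ h0 h1 hγs
    rw [le_inv_mul_iff₀ h0]
    have hcm : γ * ∫ ω, W ω ∂(η[|S]) = (∫ ω, W ω ∂(η[|S])) * γ := mul_comm _ _
    linarith [this]
  · have hγ1 : γ = 1 := le_antisymm (hγs.trans hs1) h1
    subst hγ1
    simp only [inv_one, one_mul, sub_self]
    have hIco : ∫ u in Ico (0:ℝ) 1, q u = ∫ u in Ioo (0:ℝ) 1, q u :=
      (setIntegral_congr_set Ioo_ae_eq_Ico).symm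
    rw [hIco]
    have hun : (⋃ n : ℕ, Ico (((n:ℝ)+2)⁻¹) 1) = Ioo (0:ℝ) 1 := by
      ext u
      simp only [Set.mem_iUnion, Set.mem_Ico, Set.mem_Ioo]
      constructor
      · rintro ⟨n, hn1, hn2⟩
        have : (0:ℝ) < ((n:ℝ)+2)⁻¹ := by positivity
        exact ⟨by linarith, hn2⟩
      · rintro ⟨hu1, hu2⟩
        obtain ⟨n, hn⟩ := exists_nat_gt u⁻¹
        refine ⟨n, ?_, hu2⟩
        have : ((n:ℝ)+2)⁻¹ < u := by
          rw [inv_lt_comm₀ (by positivity) hu1]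
          calc u⁻¹ < n := hn
            _ < n + 2 := by linarith
        linarith
    have hmono : Monotone fun n : ℕ => Ico (((n:ℝ)+2)⁻¹) (1:ℝ) := by
      intro a b hab u hu
      have : ((b:ℝ)+2)⁻¹ ≤ ((a:ℝ)+2)⁻¹ := by
        apply inv_anti₀ (by positivity) (by exact_mod_cast by omega)
      exact ⟨le_trans this hu.1, hu.2⟩
    have htend1 : Filter.Tendsto (fun n : ℕ => ∫ u in Ico (((n:ℝ)+2)⁻¹) (1:ℝ), q u)
        Filter.atTop (nhds (∫ u in Ioo (0:ℝ) 1, q u)) := by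
      have := tendsto_setIntegral_of_monotone (μ := volume) (f := q)
        (fun n : ℕ => measurableSet_Ico) hmono (by rw [hun]; exact q_int_Ioo η W hW hWi)
      rwa [hun] at this
    have htend2 : Filter.Tendsto (fun n : ℕ => (1 - ((n:ℝ)+2)⁻¹) * m)
        Filter.atTop (nhds m) := by
      have := gamma_seq_tendsto.mul_const m
      simpa using this
    refine le_of_tendsto_of_tendsto' htend2 htend1 fun n => ?_
    have hpos : (0:ℝ) < ((n:ℝ)+2)⁻¹ := by positivity
    have := trim_upper_lt η W hW hWi S hSm (1 - ((n:ℝ)+2)⁻¹)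
      (gamma_seq_pos n) (by linarith)
      (le_trans (by linarith) hγs)
    simpa using this

end Trim2



section Plumb

variable {Ω : Type*} [MeasurableSpace Ω]

/-- The σ-algebra appearing in `RCT`. -/
def bigG (K : ℕ) (Y : ℕ → ℕ → Ω → ℝ) (D0 D1 : Ω → ℕ) : MeasurableSpace Ω :=
  (⨆ z ∈ ({0, 1} : Set ℕ), ⨆ d ∈ Set.Icc 1 K, MeasurableSpace.comap (Y z d) inferInstance)
    ⊔ MeasurableSpace.comap D0 inferInstance ⊔ MeasurableSpace.comap D1 inferInstance

lemma bigG_D1 (K : ℕ) (Y : ℕ → ℕ → Ω → ℝ) (D0 D1 : Ω → ℕ) (d : ℕ) :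
    MeasurableSet[bigG K Y D0 D1] {ω | D1 ω = d} := by
  have hle : MeasurableSpace.comap D1 inferInstance ≤ bigG K Y D0 D1 := le_sup_right
  exact hle _ ⟨{d}, measurableSet_singleton d, rfl⟩

lemma bigG_D0 (K : ℕ) (Y : ℕ → ℕ → Ω → ℝ) (D0 D1 : Ω → ℕ) (d : ℕ) :
    MeasurableSet[bigG K Y D0 D1] {ω | D0 ω = d} := by
  have hle : MeasurableSpace.comap D0 inferInstance ≤ bigG K Y D0 D1 :=
    le_sup_right.trans le_sup_left
  exact hle _ ⟨{d}, measurableSet_singleton d, rfl⟩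

lemma bigG_Y (K : ℕ) (Y : ℕ → ℕ → Ω → ℝ) (D0 D1 : Ω → ℕ) (z : ℕ) (hz : z ≤ 1)
    (dd : ℕ) (hd1 : 1 ≤ dd) (hdK : dd ≤ K) (w : ℝ) :
    MeasurableSet[bigG K Y D0 D1] {ω | Y z dd ω ≤ w} := by
  have hzmem : z ∈ ({0, 1} : Set ℕ) := by
    rcases Nat.le_one_iff_eq_zero_or_eq_one.mp hz with h | h <;> simp [h]
  have hle : MeasurableSpace.comap (Y z dd) inferInstance ≤ bigG K Y D0 D1 := by
    refine le_trans ?_ (le_sup_left.trans le_sup_left)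
    refine le_trans ?_ (le_biSup _ hzmem)
    exact le_biSup (fun d' => MeasurableSpace.comap (Y z d') inferInstance)
      (Set.mem_Icc.mpr ⟨hd1, hdK⟩)
  exact hle _ ⟨Set.Iic w, measurableSet_Iic, rfl⟩

lemma RCT_indep (P : Measure Ω) (K : ℕ) (Y : ℕ → ℕ → Ω → ℝ) (D0 D1 Z : Ω → ℕ)
    (hRCT : RCT P K Y D0 D1 Z) (E : Set Ω) (hE : MeasurableSet[bigG K Y D0 D1] E) (z : ℕ) :
    P (E ∩ {ω | Z ω = z}) = P E * P {ω | Z ω = z} := by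
  have h : ProbabilityTheory.Indep (bigG K Y D0 D1)
      (MeasurableSpace.comap Z inferInstance) P := hRCT
  exact (h.indepSet_of_measurableSet hE
    ⟨{z}, measurableSet_singleton z, rfl⟩).measure_inter_eq_mul

end Plumb

/-- validity of the multilayered bounds for stayers: under
Assumption RCT, if the true response-type probability vector lies in
`Θ_I(R)`, then the local controlled direct effect for the stayers at layer `d`
is bounded by the corresponding truncated means. -/
theorem multilayered_bounds_stayers
    {Ω : Type*} [MeasurableSpace Ω] (P : Measure Ω) [IsProbabilityMeasure P]
    (K : ℕ) (hK : 1 ≤ K)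
    (Z D0 D1 : Ω → ℕ)
    (hZm : Measurable Z) (hD0m : Measurable D0) (hD1m : Measurable D1)
    (hZ01 : ∀ ω, Z ω ≤ 1) (hD0K : ∀ ω, D0 ω ≤ K) (hD1K : ∀ ω, D1 ω ≤ K)
    (hZpos : 0 < P {ω | Z ω = 1}) (hZlt : P {ω | Z ω = 1} < 1)
    (Y : ℕ → ℕ → Ω → ℝ)
    (hYm : ∀ z ≤ 1, ∀ d, 1 ≤ d → d ≤ K → Measurable (Y z d))
    (hYint : ∀ z ≤ 1, ∀ d, 1 ≤ d → d ≤ K → Integrable (Y z d) P)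
    (hRCT : RCT P K Y D0 D1 Z)
    (R : (ℕ × ℕ → ℝ) → Prop)
    (hTrue : (fun t : ℕ × ℕ => (P {ω | D0 ω = t.1 ∧ D1 ω = t.2}).toReal)
        ∈ ThetaI P K Z D0 D1 R)
    (d : ℕ) (hd1 : 1 ≤ d) (hdK : d ≤ K)
    (hTdd : 0 < P {ω | D0 ω = d ∧ D1 ω = d})
    (hprop1 : 0 < propScore P Z D0 D1 d 1) (hprop0 : 0 < propScore P Z D0 D1 d 0)
    (hγ1 : 0 < pbar P K Z D0 D1 R (d, d) / propScore P Z D0 D1 d 1)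
    (hγ0 : 0 < pbar P K Z D0 D1 R (d, d) / propScore P Z D0 D1 d 0) :
    (lowerTrunc (FYcond P K Z D0 D1 Y d 1)
          (pbar P K Z D0 D1 R (d, d) / propScore P Z D0 D1 d 1)
        - upperTrunc (FYcond P K Z D0 D1 Y d 0)
          (pbar P K Z D0 D1 R (d, d) / propScore P Z D0 D1 d 0)
      ≤ ∫ ω, (Y 1 d ω - Y 0 d ω) ∂(P[|{ω | D0 ω = d ∧ D1 ω = d}]))
    ∧ (∫ ω, (Y 1 d ω - Y 0 d ω) ∂(P[|{ω | D0 ω = d ∧ D1 ω = d}])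
      ≤ upperTrunc (FYcond P K Z D0 D1 Y d 1)
          (pbar P K Z D0 D1 R (d, d) / propScore P Z D0 D1 d 1)
        - lowerTrunc (FYcond P K Z D0 D1 Y d 0)
          (pbar P K Z D0 D1 R (d, d) / propScore P Z D0 D1 d 0)) := by
  classical
  set B1 : Set Ω := {ω | D1 ω = d} with hB1def
  set B0 : Set Ω := {ω | D0 ω = d} with hB0def
  set S : Set Ω := {ω | D0 ω = d ∧ D1 ω = d} with hSdef
  have hB1m : MeasurableSet B1 := hD1m (measurableSet_singleton d)
  have hB0m : MeasurableSet B0 := hD0m (measurableSet_singleton d)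
  have hSm : MeasurableSet S := by
    have hSeq : S = B0 ∩ B1 := by
      ext ω
      simp only [hSdef, hB0def, hB1def, Set.mem_setOf_eq, Set.mem_inter_iff]
    rw [hSeq]
    exact hB0m.inter hB1m
  have hZ1m : MeasurableSet {ω | Z ω = 1} := hZm (measurableSet_singleton 1)
  have hZ0m : MeasurableSet {ω | Z ω = 0} := hZm (measurableSet_singleton 0)
  have hPZ1ne : P {ω | Z ω = 1} ≠ 0 := hZpos.ne'
  have hZcompl : {ω | Z ω = 0} = {ω | Z ω = 1}ᶜ := by
    ext ω
    have := hZ01 ω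
    simp only [Set.mem_setOf_eq, Set.mem_compl_iff]
    omega
  have hPZ0ne : P {ω | Z ω = 0} ≠ 0 := by
    rw [hZcompl, measure_compl hZ1m (measure_ne_top _ _), measure_univ]
    rw [Ne, tsub_eq_zero_iff_le]
    exact not_le.2 hZlt
  -- independence machinery
  have hind : ∀ E : Set Ω, MeasurableSet[bigG K Y D0 D1] E → ∀ z : ℕ,
      P (E ∩ {ω | Z ω = z}) = P E * P {ω | Z ω = z} :=
    fun E hE z => RCT_indep P K Y D0 D1 Z hRCT E hE z
  have hGY : ∀ z : ℕ, z ≤ 1 → ∀ w : ℝ, MeasurableSet[bigG K Y D0 D1] {ω | Y z d ω ≤ w} :=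
    fun z hz w => bigG_Y K Y D0 D1 z hz d hd1 hdK w
  have hGB1 : MeasurableSet[bigG K Y D0 D1] B1 := bigG_D1 K Y D0 D1 d
  have hGB0 : MeasurableSet[bigG K Y D0 D1] B0 := bigG_D0 K Y D0 D1 d
  -- Dreal on {Z = z}
  have hD1real : ∀ ω, Z ω = 1 → Dreal Z D0 D1 ω = D1 ω := by
    intro ω h
    simp [Dreal, h]
  have hD0real : ∀ ω, Z ω = 0 → Dreal Z D0 D1 ω = D0 ω := by
    intro ω h
    simp [Dreal, h]
  have hA1 : {ω | Dreal Z D0 D1 ω = d ∧ Z ω = 1} = B1 ∩ {ω | Z ω = 1} := by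
    ext ω
    simp only [Set.mem_setOf_eq, Set.mem_inter_iff, hB1def]
    constructor
    · rintro ⟨h1, h2⟩
      rw [hD1real ω h2] at h1
      exact ⟨h1, h2⟩
    · rintro ⟨h1, h2⟩
      exact ⟨by rw [hD1real ω h2]; exact h1, h2⟩
  have hA0 : {ω | Dreal Z D0 D1 ω = d ∧ Z ω = 0} = B0 ∩ {ω | Z ω = 0} := by
    ext ω
    simp only [Set.mem_setOf_eq, Set.mem_inter_iff, hB0def]
    constructor
    · rintro ⟨h1, h2⟩
      rw [hD0real ω h2] at h1
      exact ⟨h1, h2⟩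
    · rintro ⟨h1, h2⟩
      exact ⟨by rw [hD0real ω h2]; exact h1, h2⟩
  -- propensity scores
  have hprop1eq : propScore P Z D0 D1 d 1 = (P B1).toReal := by
    unfold propScore
    rw [cond_apply hZ1m]
    have hset : {ω | Z ω = 1} ∩ {ω | Dreal Z D0 D1 ω = d} = B1 ∩ {ω | Z ω = 1} := by
      rw [← hA1]
      ext ω
      simp only [Set.mem_inter_iff, Set.mem_setOf_eq]
      tauto
    rw [hset, hind B1 hGB1 1, mul_comm (P B1), ← mul_assoc,
      ENNReal.inv_mul_cancel hPZ1ne (measure_ne_top _ _), one_mul]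
  have hprop0eq : propScore P Z D0 D1 d 0 = (P B0).toReal := by
    unfold propScore
    rw [cond_apply hZ0m]
    have hset : {ω | Z ω = 0} ∩ {ω | Dreal Z D0 D1 ω = d} = B0 ∩ {ω | Z ω = 0} := by
      rw [← hA0]
      ext ω
      simp only [Set.mem_inter_iff, Set.mem_setOf_eq]
      tauto
    rw [hset, hind B0 hGB0 0, mul_comm (P B0), ← mul_assoc,
      ENNReal.inv_mul_cancel hPZ0ne (measure_ne_top _ _), one_mul]
  have hPB1ne : P B1 ≠ 0 := by
    intro h
    rw [hprop1eq, h] at hprop1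
    simp at hprop1
  have hPB0ne : P B0 ≠ 0 := by
    intro h
    rw [hprop0eq, h] at hprop0
    simp at hprop0
  haveI hPM1 : IsProbabilityMeasure (P[|B1]) := cond_isProbabilityMeasure hPB1ne
  haveI hPM0 : IsProbabilityMeasure (P[|B0]) := cond_isProbabilityMeasure hPB0ne
  -- collapse of the realized outcome
  have hYcol : ∀ z : ℕ, z ≤ 1 → ∀ ω, Z ω = z → Dreal Z D0 D1 ω = d →
      Yreal K Z D0 D1 Y ω = Y z d ω := by
    intro z hz ω hzω hD
    unfold Yreal
    rw [Finset.sum_eq_single d]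
    · rcases Nat.le_one_iff_eq_zero_or_eq_one.mp hz with h | h <;>
        subst h <;> simp [hD, hzω]
    · intro b hb hbd
      rw [hD, if_neg (Ne.symm hbd), mul_zero]
    · intro hd
      exact absurd (Finset.mem_Icc.mpr ⟨hd1, hdK⟩) hd
  have hDrm : Measurable (Dreal Z D0 D1) :=
    (hD1m.mul hZm).add (hD0m.mul (measurable_const.sub hZm))
  -- conditional CDFs
  have hF1 : FYcond P K Z D0 D1 Y d 1 = cdfOf (P[|B1]) (Y 1 d) := by
    funext w
    unfold FYcond cdfOf
    congr 1
    have hA1m : MeasurableSet {ω | Dreal Z D0 D1 ω = d ∧ Z ω = 1} :=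
      (hDrm (measurableSet_singleton d)).inter hZ1m
    rw [cond_apply hA1m, cond_apply hB1m]
    have hPA1 : P {ω | Dreal Z D0 D1 ω = d ∧ Z ω = 1} = P B1 * P {ω | Z ω = 1} := by
      rw [hA1]
      exact hind B1 hGB1 1
    have hset2 : {ω | Dreal Z D0 D1 ω = d ∧ Z ω = 1} ∩ {ω | Yreal K Z D0 D1 Y ω ≤ w}
        = (B1 ∩ {ω | Y 1 d ω ≤ w}) ∩ {ω | Z ω = 1} := by
      ext ω
      simp only [Set.mem_inter_iff, Set.mem_setOf_eq, hB1def]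
      constructor
      · rintro ⟨⟨h1, h2⟩, h3⟩
        rw [hYcol 1 le_rfl ω h2 h1] at h3
        rw [hD1real ω h2] at h1
        exact ⟨⟨h1, h3⟩, h2⟩
      · rintro ⟨⟨h1, h3⟩, h2⟩
        have hDr : Dreal Z D0 D1 ω = d := by rw [hD1real ω h2]; exact h1
        refine ⟨⟨hDr, h2⟩, ?_⟩
        rw [hYcol 1 le_rfl ω h2 hDr]
        exact h3
    rw [hset2, hind _ (hGB1.inter (hGY 1 le_rfl w)) 1, hPA1]
    rw [ENNReal.mul_inv (Or.inl hPB1ne) (Or.inl (measure_ne_top _ _))]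
    rw [show (P B1)⁻¹ * (P {ω | Z ω = 1})⁻¹ * (P (B1 ∩ {ω | Y 1 d ω ≤ w}) * P {ω | Z ω = 1})
        = (P B1)⁻¹ * P (B1 ∩ {ω | Y 1 d ω ≤ w}) * ((P {ω | Z ω = 1})⁻¹ * P {ω | Z ω = 1})
      by ring]
    rw [ENNReal.inv_mul_cancel hPZ1ne (measure_ne_top _ _), mul_one]
  have hF0 : FYcond P K Z D0 D1 Y d 0 = cdfOf (P[|B0]) (Y 0 d) := by
    funext w
    unfold FYcond cdfOf
    congr 1
    have hA0m : MeasurableSet {ω | Dreal Z D0 D1 ω = d ∧ Z ω = 0} :=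
      (hDrm (measurableSet_singleton d)).inter hZ0m
    rw [cond_apply hA0m, cond_apply hB0m]
    have hPA0 : P {ω | Dreal Z D0 D1 ω = d ∧ Z ω = 0} = P B0 * P {ω | Z ω = 0} := by
      rw [hA0]
      exact hind B0 hGB0 0
    have hset2 : {ω | Dreal Z D0 D1 ω = d ∧ Z ω = 0} ∩ {ω | Yreal K Z D0 D1 Y ω ≤ w}
        = (B0 ∩ {ω | Y 0 d ω ≤ w}) ∩ {ω | Z ω = 0} := by
      ext ω
      simp only [Set.mem_inter_iff, Set.mem_setOf_eq, hB0def]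
      constructor
      · rintro ⟨⟨h1, h2⟩, h3⟩
        rw [hYcol 0 (by norm_num) ω h2 h1] at h3
        rw [hD0real ω h2] at h1
        exact ⟨⟨h1, h3⟩, h2⟩
      · rintro ⟨⟨h1, h3⟩, h2⟩
        have hDr : Dreal Z D0 D1 ω = d := by rw [hD0real ω h2]; exact h1
        refine ⟨⟨hDr, h2⟩, ?_⟩
        rw [hYcol 0 (by norm_num) ω h2 hDr]
        exact h3
    rw [hset2, hind _ (hGB0.inter (hGY 0 (by norm_num) w)) 0, hPA0]
    rw [ENNReal.mul_inv (Or.inl hPB0ne) (Or.inl (measure_ne_top _ _))]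
    rw [show (P B0)⁻¹ * (P {ω | Z ω = 0})⁻¹ * (P (B0 ∩ {ω | Y 0 d ω ≤ w}) * P {ω | Z ω = 0})
        = (P B0)⁻¹ * P (B0 ∩ {ω | Y 0 d ω ≤ w}) * ((P {ω | Z ω = 0})⁻¹ * P {ω | Z ω = 0})
      by ring]
    rw [ENNReal.inv_mul_cancel hPZ0ne (measure_ne_top _ _), mul_one]
  -- iterated conditioning
  have hBS1 : B1 ∩ S = S := by
    ext ω
    simp only [Set.mem_inter_iff, hSdef, hB1def, Set.mem_setOf_eq]
    tauto
  have hBS0 : B0 ∩ S = S := by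
    ext ω
    simp only [Set.mem_inter_iff, hSdef, hB0def, Set.mem_setOf_eq]
    tauto
  have hcc1 : (P[|B1])[|S] = P[|S] := by
    rw [cond_cond_eq_cond_inter hB1m hSm, hBS1]
  have hcc0 : (P[|B0])[|S] = P[|S] := by
    rw [cond_cond_eq_cond_inter hB0m hSm, hBS0]
  -- pbar bound
  have hpble : pbar P K Z D0 D1 R (d, d) ≤ (P S).toReal := by
    refine csInf_le ⟨0, ?_⟩ ⟨_, hTrue, rfl⟩
    rintro x ⟨p, hp, rfl⟩
    exact hp.1 (d, d) (by
      simp only [Finset.mem_product, Finset.mem_range]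
      omega)
  set γ1 := pbar P K Z D0 D1 R (d, d) / propScore P Z D0 D1 d 1 with hγ1def
  set γ0 := pbar P K Z D0 D1 R (d, d) / propScore P Z D0 D1 d 0 with hγ0def
  have hγ1S : γ1 ≤ ((P[|B1]) S).toReal := by
    rw [cond_apply hB1m, hBS1, ENNReal.toReal_mul, ENNReal.toReal_inv, hγ1def, hprop1eq]
    rw [inv_mul_eq_div]
    apply div_le_div_of_nonneg_right hpble
    · rw [hprop1eq] at hprop1
      exact hprop1.le
  have hγ0S : γ0 ≤ ((P[|B0]) S).toReal := by
    rw [cond_apply hB0m, hBS0, ENNReal.toReal_mul, ENNReal.toReal_inv, hγ0def, hprop0eq]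
    rw [inv_mul_eq_div]
    apply div_le_div_of_nonneg_right hpble
    · rw [hprop0eq] at hprop0
      exact hprop0.le
  -- integrability
  have hY1i : Integrable (Y 1 d) P := hYint 1 le_rfl d hd1 hdK
  have hY0i : Integrable (Y 0 d) P := hYint 0 (by norm_num) d hd1 hdK
  have hcondint : ∀ (f : Ω → ℝ) (T : Set Ω), Integrable f P → P T ≠ 0 →
      Integrable f (P[|T]) := by
    intro f T hf hT
    have hcond : P[|T] = (P T)⁻¹ • P.restrict T := rfl
    rw [hcond]
    exact (hf.restrict).smul_measure (ENNReal.inv_ne_top.2 hT)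
  have hPSne : P S ≠ 0 := hTdd.ne'
  have hY1iB : Integrable (Y 1 d) (P[|B1]) := hcondint _ _ hY1i hPB1ne
  have hY0iB : Integrable (Y 0 d) (P[|B0]) := hcondint _ _ hY0i hPB0ne
  have hY1iS : Integrable (Y 1 d) (P[|S]) := hcondint _ _ hY1i hPSne
  have hY0iS : Integrable (Y 0 d) (P[|S]) := hcondint _ _ hY0i hPSne
  -- the four trimming bounds
  have hTlow1 : lowerTrunc (FYcond P K Z D0 D1 Y d 1) γ1 ≤ ∫ ω, Y 1 d ω ∂(P[|S]) := by
    rw [hF1]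
    have := trim_lower (P[|B1]) (Y 1 d) (hYm 1 le_rfl d hd1 hdK) hY1iB S hSm γ1 hγ1 hγ1S
    rw [hcc1] at this
    simpa [lowerTrunc] using this
  have hTup1 : ∫ ω, Y 1 d ω ∂(P[|S]) ≤ upperTrunc (FYcond P K Z D0 D1 Y d 1) γ1 := by
    rw [hF1]
    have := trim_upper (P[|B1]) (Y 1 d) (hYm 1 le_rfl d hd1 hdK) hY1iB S hSm γ1 hγ1 hγ1S
    rw [hcc1] at this
    simpa [upperTrunc] using this
  have hTlow0 : lowerTrunc (FYcond P K Z D0 D1 Y d 0) γ0 ≤ ∫ ω, Y 0 d ω ∂(P[|S]) := by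
    rw [hF0]
    have := trim_lower (P[|B0]) (Y 0 d) (hYm 0 (by norm_num) d hd1 hdK) hY0iB S hSm γ0 hγ0 hγ0S
    rw [hcc0] at this
    simpa [lowerTrunc] using this
  have hTup0 : ∫ ω, Y 0 d ω ∂(P[|S]) ≤ upperTrunc (FYcond P K Z D0 D1 Y d 0) γ0 := by
    rw [hF0]
    have := trim_upper (P[|B0]) (Y 0 d) (hYm 0 (by norm_num) d hd1 hdK) hY0iB S hSm γ0 hγ0 hγ0S
    rw [hcc0] at this
    simpa [upperTrunc] using this
  have hsub : ∫ ω, (Y 1 d ω - Y 0 d ω) ∂(P[|S])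
      = (∫ ω, Y 1 d ω ∂(P[|S])) - ∫ ω, Y 0 d ω ∂(P[|S]) := integral_sub hY1iS hY0iS
  constructor
  · rw [hsub]
    linarith [hTlow1, hTup0]
  · rw [hsub]
    linarith [hTup1, hTlow0]
end

section
/- (Validity of the multilayered bounds for switchers.) Under the multilayered sample selection model with Assumption RCT, let R be a collection of constraints on response-type probability vectors, suppose the true vector (P(T=(d,d')))_{(d,d')} belongs to Θ_I(R), and suppose every Y_{z,d} takes values in [y_L, y_U] almost surely for fixed reals y_L ≤ y_U. Fix d, d' ∈ {1,…,K} with d ≠ d', P(D=d | Z=1) > 0 and P(D=d | Z=0) > 0. Then: (a) if P(T=(d',d)) > 0 and γ̲^{1,r}_{(d',d)} > 0, then E[F^{-1}_{Y|D=d,Z=1}(U) | U ≤ γ̲^{1,r}_{(d',d)}] − y_U ≤ LCDE(d | (d',d)) ≤ E[F^{-1}_{Y|D=d,Z=1}(U) | U ≥ 1 − γ̲^{1,r}_{(d',d)}] − y_L; and (b) if P(T=(d,d')) > 0 and γ̲^{0,r}_{(d,d')} > 0, then y_L − E[F^{-1}_{Y|D=d,Z=0}(U) | U ≥ 1 − γ̲^{0,r}_{(d,d')}]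 ≤ LCDE(d | (d,d')) ≤ y_U − E[F^{-1}_{Y|D=d,Z=0}(U) | U ≤ γ̲^{0,r}_{(d,d')}]. -/
open MeasureTheory ProbabilityTheory

section Aux
open Set

noncomputable def Fof (μ : Measure ℝ) : ℝ → ℝ := fun t => (μ (Set.Iic t)).toReal

noncomputable def qExt (μ : Measure ℝ) (yL yU : ℝ) : ℝ → ℝ :=
  fun u => if u ≤ 0 then yL else if 1 < u then yU else quantileFn (Fof μ) u

section Quantile
variable {μ : Measure ℝ} [IsProbabilityMeasure μ] {yL yU : ℝ}

lemma Fof_mono : Monotone (Fof μ) := fun a b hab =>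
  ENNReal.toReal_le_toReal (measure_ne_top _ _) (measure_ne_top _ _) |>.2
    (measure_mono (Iic_subset_Iic.2 hab))

lemma Fof_nonneg (t : ℝ) : 0 ≤ Fof μ t := ENNReal.toReal_nonneg

lemma Fof_le_one (t : ℝ) : Fof μ t ≤ 1 := by
  have := prob_le_one (μ := μ) (s := Iic t)
  simpa [Fof] using ENNReal.toReal_le_toReal (measure_ne_top _ _) (by simp) |>.2 this

lemma Fof_eq_one (hsupp : μ (Set.Icc yL yU)ᶜ = 0) {t : ℝ} (h : yU ≤ t) : Fof μ t = 1 := by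
  have h0 : μ (Ioi t) = 0 := by
    refine measure_mono_null (fun x hx => ?_) hsupp
    simp only [mem_compl_iff, mem_Icc, not_and_or, not_le]
    right; exact lt_of_le_of_lt h hx
  have : μ (Iic t) = 1 := by
    have := measure_add_measure_compl (μ := μ) (measurableSet_Iic (a := t))
    rw [compl_Iic, h0, add_zero] at this
    simpa using this
  simp [Fof, this]

lemma Fof_eq_zero (hsupp : μ (Set.Icc yL yU)ᶜ = 0) {t : ℝ} (h : t < yL) : Fof μ t = 0 := by
  have : μ (Iic t) = 0 := by
    refine measure_mono_null (fun x hx => ?_) hsupp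
    simp only [mem_compl_iff, mem_Icc, not_and_or, not_le]
    left; exact lt_of_le_of_lt hx h
  simp [Fof, this]

lemma le_Fof_of_forall_lt {t u : ℝ} (h : ∀ t', t < t' → u ≤ Fof μ t') : u ≤ Fof μ t := by
  have hseq : Filter.Tendsto (fun n : ℕ => μ (Iic (t + 1/(n+1)))) Filter.atTop (nhds (μ (Iic t))) := by
    have hI : ⋂ n : ℕ, Iic (t + 1/(n+1)) = Iic t := by
      ext x
      simp only [mem_iInter, mem_Iic]
      constructor
      · intro hx
        by_contra hlt
        push_neg at hlt
        obtain ⟨n, hn⟩ := exists_nat_one_div_lt (sub_pos.2 hlt)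
        have := hx n
        nlinarith [hn]
      · intro hx n
        have : (0:ℝ) < 1/(n+1) := by positivity
        linarith
    have := tendsto_measure_iInter_atTop (μ := μ)
      (s := fun n : ℕ => Iic (t + 1/(n+1)))
      (fun n => (measurableSet_Iic).nullMeasurableSet)
      (fun m n hmn => Iic_subset_Iic.2 (by
        have : (1:ℝ)/(n+1) ≤ 1/(m+1) := by
          apply one_div_le_one_div_of_le (by positivity)
          exact_mod_cast by omega
        linarith))
      ⟨0, measure_ne_top _ _⟩
    rwa [hI] at this
  have htr : Filter.Tendsto (fun n : ℕ => Fof μ (t + 1/(n+1))) Filter.atTop (nhds (Fof μ t)) := by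
    exact (ENNReal.tendsto_toReal (measure_ne_top _ _)).comp hseq
  refine ge_of_tendsto htr ?_
  filter_upwards with n
  refine h _ ?_
  have : (0:ℝ) < 1/(n+1) := by positivity
  linarith

end Quantile

section Quantile2
variable {μ : Measure ℝ} [IsProbabilityMeasure μ] {yL yU : ℝ}

lemma quantile_bddBelow (hsupp : μ (Set.Icc yL yU)ᶜ = 0) {u : ℝ} (hu : 0 < u) :
    BddBelow {w | u ≤ Fof μ w} := by
  refine ⟨yL, fun w hw => ?_⟩
  by_contra hlt
  push_neg at hlt
  have := Fof_eq_zero hsupp hlt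
  simp only [mem_setOf_eq] at hw
  rw [this] at hw; linarith

lemma quantile_nonempty (hsupp : μ (Set.Icc yL yU)ᶜ = 0) {u : ℝ} (hu1 : u ≤ 1) :
    ({w | u ≤ Fof μ w} : Set ℝ).Nonempty :=
  ⟨yU, by simp only [mem_setOf_eq, Fof_eq_one hsupp le_rfl]; exact hu1⟩

lemma quantile_le_iff_s15 (hsupp : μ (Set.Icc yL yU)ᶜ = 0) {u t : ℝ} (hu : 0 < u) (hu1 : u ≤ 1) :
    quantileFn (Fof μ) u ≤ t ↔ u ≤ Fof μ t := by
  constructor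
  · intro hq
    refine le_Fof_of_forall_lt (fun t' ht' => ?_)
    obtain ⟨w, hw, hwt⟩ := exists_lt_of_csInf_lt (quantile_nonempty hsupp hu1)
      (lt_of_le_of_lt hq ht')
    exact le_trans hw (Fof_mono hwt.le)
  · intro hF
    exact csInf_le (quantile_bddBelow hsupp hu) hF

lemma quantile_mem (hsupp : μ (Set.Icc yL yU)ᶜ = 0) {u : ℝ} (hu : 0 < u) (hu1 : u ≤ 1) :
    quantileFn (Fof μ) u ∈ Set.Icc yL yU := by
  constructor
  · refine le_csInf (quantile_nonempty hsupp hu1) (fun w hw => ?_)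
    by_contra hlt
    push_neg at hlt
    have := Fof_eq_zero hsupp hlt
    simp only [mem_setOf_eq] at hw
    rw [this] at hw; linarith
  · refine csInf_le (quantile_bddBelow hsupp hu) ?_
    simp only [mem_setOf_eq, Fof_eq_one hsupp le_rfl]
    exact hu1

lemma quantile_mono (hsupp : μ (Set.Icc yL yU)ᶜ = 0) {u v : ℝ} (hu : 0 < u) (huv : u ≤ v)
    (hv1 : v ≤ 1) : quantileFn (Fof μ) u ≤ quantileFn (Fof μ) v :=
  csInf_le_csInf (quantile_bddBelow hsupp hu) (quantile_nonempty hsupp hv1)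
    (fun w hw => le_trans huv hw)

lemma qExt_eq {u : ℝ} (hu : 0 < u) (hu1 : u ≤ 1) :
    qExt μ yL yU u = quantileFn (Fof μ) u := by
  simp [qExt, not_le.2 hu, not_lt.2 hu1]

lemma qExt_mem (hyLU : yL ≤ yU) (hsupp : μ (Set.Icc yL yU)ᶜ = 0) (u : ℝ) :
    qExt μ yL yU u ∈ Set.Icc yL yU := by
  unfold qExt
  split_ifs with h1 h2
  · exact ⟨le_rfl, hyLU⟩
  · exact ⟨hyLU, le_rfl⟩
  · exact quantile_mem hsupp (not_le.1 h1) (not_lt.1 h2)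

lemma qExt_mono (hyLU : yL ≤ yU) (hsupp : μ (Set.Icc yL yU)ᶜ = 0) :
    Monotone (qExt μ yL yU) := by
  intro u v huv
  unfold qExt
  rcases le_or_gt u 0 with hu | hu
  · rw [if_pos hu]
    split_ifs with h1 h2
    · exact le_rfl
    · exact hyLU
    · exact (quantile_mem hsupp (not_le.1 h1) (not_lt.1 h2)).1
  · rw [if_neg (not_le.2 hu)]
    rcases lt_or_ge 1 u with h1u | h1u
    · rw [if_pos h1u, if_neg (not_le.2 (hu.trans_le huv)), if_pos (h1u.trans_le huv)]
    · rw [if_neg (not_lt.2 h1u), if_neg (not_le.2 (hu.trans_le huv))]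
      rcases lt_or_ge 1 v with h1v | h1v
      · rw [if_pos h1v]
        exact (quantile_mem hsupp hu h1u).2
      · rw [if_neg (not_lt.2 h1v)]
        exact quantile_mono hsupp hu huv h1v

end Quantile2

section MapQ
variable {μ : Measure ℝ} [IsProbabilityMeasure μ] {yL yU : ℝ}

lemma map_qExt (hyLU : yL ≤ yU) (hsupp : μ (Set.Icc yL yU)ᶜ = 0) :
    Measure.map (qExt μ yL yU) (volume.restrict (Set.Ioo 0 1)) = μ := by
  have hqm : Measurable (qExt μ yL yU) := (qExt_mono hyLU hsupp).measurable
  have hfin : IsProbabilityMeasure (Measure.map (qExt μ yL yU) (volume.restrict (Set.Ioo 0 1))) := by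
    constructor
    rw [Measure.map_apply hqm MeasurableSet.univ]
    simp [Real.volume_Ioo]
  refine Measure.ext_of_Iic _ _ (fun a => ?_)
  rw [Measure.map_apply hqm measurableSet_Iic, Measure.restrict_apply (hqm measurableSet_Iic)]
  have hset : qExt μ yL yU ⁻¹' Iic a ∩ Ioo 0 1 = {u | 0 < u ∧ u < 1 ∧ u ≤ Fof μ a} := by
    ext u
    simp only [mem_inter_iff, mem_preimage, mem_Iic, mem_Ioo, mem_setOf_eq]
    constructor
    · rintro ⟨hq, hu0, hu1⟩
      rw [qExt_eq hu0 hu1.le] at hq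
      exact ⟨hu0, hu1, (quantile_le_iff_s15 hsupp hu0 hu1.le).1 hq⟩
    · rintro ⟨hu0, hu1, hF⟩
      exact ⟨by rw [qExt_eq hu0 hu1.le]; exact (quantile_le_iff_s15 hsupp hu0 hu1.le).2 hF, hu0, hu1⟩
  rw [hset]
  have hFa0 : 0 ≤ Fof μ a := Fof_nonneg a
  have hFa1 : Fof μ a ≤ 1 := Fof_le_one a
  have hμa : μ (Iic a) = ENNReal.ofReal (Fof μ a) := by
    rw [Fof, ENNReal.ofReal_toReal (measure_ne_top _ _)]
  rcases lt_or_ge (Fof μ a) 1 with hlt | hge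
  · have : {u | 0 < u ∧ u < 1 ∧ u ≤ Fof μ a} = Ioc 0 (Fof μ a) := by
      ext u
      simp only [mem_setOf_eq, mem_Ioc]
      exact ⟨fun ⟨h1, _, h3⟩ => ⟨h1, h3⟩, fun ⟨h1, h3⟩ => ⟨h1, lt_of_le_of_lt h3 hlt, h3⟩⟩
    rw [this, Real.volume_Ioc, sub_zero, hμa]
  · have hFa : Fof μ a = 1 := le_antisymm hFa1 hge
    have : {u | 0 < u ∧ u < 1 ∧ u ≤ Fof μ a} = Ioo 0 1 := by
      ext u
      simp only [mem_setOf_eq, mem_Ioo, hFa]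
      exact ⟨fun ⟨h1, h2, _⟩ => ⟨h1, h2⟩, fun ⟨h1, h2⟩ => ⟨h1, h2, h2.le⟩⟩
    rw [this, Real.volume_Ioo, hμa, hFa]
    norm_num

lemma integral_qExt (hyLU : yL ≤ yU) (hsupp : μ (Set.Icc yL yU)ᶜ = 0)
    {g : ℝ → ℝ} (hg : Measurable g) :
    ∫ x, g x ∂μ = ∫ u in Set.Ioo (0:ℝ) 1, g (qExt μ yL yU u) := by
  have h := integral_map (μ := volume.restrict (Set.Ioo (0:ℝ) 1))
    ((qExt_mono hyLU hsupp).measurable).aemeasurable (f := g) hg.aestronglyMeasurable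
  rw [map_qExt hyLU hsupp] at h
  exact h

end MapQ

lemma integrableOn_of_bdd {f : ℝ → ℝ} (hf : Measurable f) {M : ℝ} (hM : ∀ x, |f x| ≤ M)
    {s : Set ℝ} (hs : volume s ≠ ⊤) : IntegrableOn f s volume := by
  haveI : IsFiniteMeasure (volume.restrict s) :=
    ⟨by rwa [Measure.restrict_apply_univ, lt_top_iff_ne_top]⟩
  exact (integrable_const M).mono' hf.aestronglyMeasurable
    (Filter.Eventually.of_forall (fun x => by simpa [Real.norm_eq_abs] using hM x))

lemma integrable_of_cont {μ : Measure ℝ} [IsFiniteMeasure μ] {yL yU : ℝ}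
    (hsupp : μ (Set.Icc yL yU)ᶜ = 0) {g : ℝ → ℝ} (hg : Continuous g) : Integrable g μ := by
  obtain ⟨C, hC⟩ := (isCompact_Icc (a := yL) (b := yU)).exists_bound_of_continuousOn
    hg.continuousOn
  refine (integrable_const C).mono' hg.aestronglyMeasurable ?_
  have hae : ∀ᵐ x ∂μ, x ∈ Set.Icc yL yU := by
    rw [ae_iff]; simpa [Set.compl_def] using hsupp
  filter_upwards [hae] with x hx using hC x hx

lemma ae_mem_of_supp {μ : Measure ℝ} {yL yU : ℝ} (hsupp : μ (Set.Icc yL yU)ᶜ = 0) :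
    ∀ᵐ x ∂μ, x ∈ Set.Icc yL yU := by
  rw [ae_iff]; simpa [Set.compl_def] using hsupp

lemma trim_bounds {μ ν : Measure ℝ} [IsProbabilityMeasure μ] [IsProbabilityMeasure ν]
    {yL yU : ℝ} (hyLU : yL ≤ yU)
    (hsuppμ : μ (Set.Icc yL yU)ᶜ = 0) (hsuppν : ν (Set.Icc yL yU)ᶜ = 0)
    {c γ : ℝ} (hγ : 0 < γ) (hγc : γ ≤ c)
    (hsub : ∀ s : Set ℝ, MeasurableSet s → ENNReal.ofReal c * ν s ≤ μ s) :
    γ⁻¹ * (∫ u in Set.Ioc (0:ℝ) γ, quantileFn (Fof μ) u) ≤ ∫ x, x ∂ν ∧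
    ∫ x, x ∂ν ≤ γ⁻¹ * (∫ u in Set.Ico (1-γ) (1:ℝ), quantileFn (Fof μ) u) := by
  have hc : 0 < c := hγ.trans_le hγc
  have hc1 : c ≤ 1 := by
    have h := hsub Set.univ MeasurableSet.univ
    simp only [measure_univ, mul_one] at h
    exact ENNReal.ofReal_le_one.1 h
  have hγ1 : γ ≤ 1 := hγc.trans hc1
  set q : ℝ → ℝ := qExt μ yL yU with hq
  have hqmono : Monotone q := qExt_mono hyLU hsuppμ
  have hqmeas : Measurable q := hqmono.measurable
  have hqmem : ∀ u, q u ∈ Set.Icc yL yU := qExt_mem hyLU hsuppμ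
  set M : ℝ := |yL| + |yU| with hM
  have hqb : ∀ u, |q u| ≤ M := fun u => by
    have h := hqmem u
    rw [abs_le]
    constructor <;>
      [linarith [neg_abs_le yL, abs_nonneg yU, h.1]; linarith [le_abs_self yU, abs_nonneg yL, h.2]]
  set ρ : Measure ℝ := ENNReal.ofReal c • ν with hρ
  haveI : IsFiniteMeasure ρ := by
    constructor
    simp only [hρ, Measure.smul_apply, smul_eq_mul, measure_univ, mul_one]
    exact ENNReal.ofReal_lt_top
  have hρle : ρ ≤ μ := Measure.le_iff.2 fun s hs => by
    simpa [hρ, Measure.smul_apply, smul_eq_mul] using hsub s hs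
  have hρsupp : ρ (Set.Icc yL yU)ᶜ = 0 := by
    simp [hρ, Measure.smul_apply, hsuppν]
  have hρuniv : (ρ Set.univ).toReal = c := by
    simp [hρ, Measure.smul_apply, ENNReal.toReal_ofReal hc.le]
  have hintρ : ∀ {g : ℝ → ℝ}, Continuous g → Integrable g ρ :=
    fun hg => integrable_of_cont hρsupp hg
  have hintμ : ∀ {g : ℝ → ℝ}, Continuous g → Integrable g μ :=
    fun hg => integrable_of_cont hsuppμ hg
  have hρint : ∫ x, x ∂ρ = c * ∫ x, x ∂ν := by
    rw [hρ, integral_smul_measure, ENNReal.toReal_ofReal hc.le, smul_eq_mul]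
  have hM0 : 0 ≤ M := (abs_nonneg (q 0)).trans (hqb 0)
  have habs_min : ∀ a : ℝ, |min a 0| ≤ |a| := fun a => by
    rcases le_total a 0 with h | h
    · rw [min_eq_left h]
    · rw [min_eq_right h]; simpa using abs_nonneg a
  have habs_max : ∀ a : ℝ, |max a 0| ≤ |a| := fun a => by
    rcases le_total a 0 with h | h
    · rw [max_eq_right h]; simpa using abs_nonneg a
    · rw [max_eq_left h]
  have hIoc_ne : ∀ a b : ℝ, volume (Set.Ioc a b) ≠ ⊤ := fun a b => by
    rw [Real.volume_Ioc]; exact ENNReal.ofReal_ne_top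
  have hIoo_ne : ∀ a b : ℝ, volume (Set.Ioo a b) ≠ ⊤ := fun a b => by
    rw [Real.volume_Ioo]; exact ENNReal.ofReal_ne_top
  have hIco_ne : ∀ a b : ℝ, volume (Set.Ico a b) ≠ ⊤ := fun a b => by
    rw [Real.volume_Ico]; exact ENNReal.ofReal_ne_top
  -- lower bound:  ∫_{Ioc 0 c} q ≤ ∫ x ∂ρ
  have hlow : ∫ u in Set.Ioc (0:ℝ) c, q u ≤ ∫ x, x ∂ρ := by
    set m : ℝ := q c with hm
    -- step: ∫ min(x-m,0) ∂ρ ≥ ∫ min(x-m,0) ∂μ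
    have hmono_meas : ∫ x, min (x - m) 0 ∂μ ≤ ∫ x, min (x - m) 0 ∂ρ := by
      have hf : Continuous (fun x : ℝ => max (m - x) 0) :=
        (continuous_const.sub continuous_id).max continuous_const
      have hmm : ∫ x, max (m - x) 0 ∂ρ ≤ ∫ x, max (m - x) 0 ∂μ :=
        integral_mono_measure hρle
          (Filter.Eventually.of_forall (fun x => le_max_right _ _)) (hintμ hf)
      have hkey : ∀ x : ℝ, min (x - m) 0 = -(max (m - x) 0) := fun x => by
        rcases le_total x m with h | h
        · rw [min_eq_left (by linarith), max_eq_left (by linarith)]; ring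
        · rw [min_eq_right (by linarith), max_eq_right (by linarith)]; ring
      simp only [hkey, integral_neg]
      linarith
    -- step: transfer to quantile integral
    have hminq_meas : Measurable (fun u => min (q u - m) 0) :=
      (hqmeas.sub measurable_const).min measurable_const
    have hminq_bdd : ∀ u, |min (q u - m) 0| ≤ M + |m| := fun u =>
      (habs_min _).trans ((abs_sub (q u) m).trans (by linarith [hqb u]))
    have htrans : ∫ x, min (x - m) 0 ∂μ = ∫ u in Set.Ioo (0:ℝ) 1, min (q u - m) 0 :=
      integral_qExt hyLU hsuppμ ((continuous_id.sub continuous_const).min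
        continuous_const).measurable
    have hsplitset : Set.Ioo (0:ℝ) 1 = Set.Ioo 0 c ∪ Set.Ico c 1 :=
      (Set.Ioo_union_Ico_eq_Ioo hc hc1).symm
    have hdisj : Disjoint (Set.Ioo (0:ℝ) c) (Set.Ico c 1) :=
      Set.disjoint_left.2 (fun u hu hu' => absurd hu'.1 (not_le.2 hu.2))
    have hsplit : ∫ u in Set.Ioo (0:ℝ) 1, min (q u - m) 0
        = (∫ u in Set.Ioo (0:ℝ) c, min (q u - m) 0)
          + ∫ u in Set.Ico c 1, min (q u - m) 0 := by
      rw [hsplitset]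
      exact setIntegral_union hdisj measurableSet_Ico
        (integrableOn_of_bdd hminq_meas hminq_bdd (hIoo_ne _ _))
        (integrableOn_of_bdd hminq_meas hminq_bdd (hIco_ne _ _))
    have hright : ∫ u in Set.Ico c 1, min (q u - m) 0 = 0 := by
      rw [setIntegral_congr_fun measurableSet_Ico
        (fun u hu => min_eq_right (sub_nonneg.2 (hqmono hu.1)) : Set.EqOn _ (fun _ => (0:ℝ)) _)]
      simp
    have hleft : ∫ u in Set.Ioo (0:ℝ) c, min (q u - m) 0 = ∫ u in Set.Ioo (0:ℝ) c, (q u - m) := by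
      refine setIntegral_congr_fun measurableSet_Ioo (fun u hu => ?_)
      exact min_eq_left (sub_nonpos.2 (hqmono hu.2.le))
    have hIocIoo : ∫ u in Set.Ioc (0:ℝ) c, (q u - m) = ∫ u in Set.Ioo (0:ℝ) c, (q u - m) :=
      integral_Ioc_eq_integral_Ioo
    -- put together
    have hsub_int : ∫ u in Set.Ioc (0:ℝ) c, (q u - m)
        = (∫ u in Set.Ioc (0:ℝ) c, q u) - c * m := by
      rw [integral_sub (integrableOn_of_bdd hqmeas hqb (hIoc_ne _ _))
        (integrableOn_of_bdd measurable_const (fun _ => le_refl |m|) (hIoc_ne _ _))]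
      rw [setIntegral_const, measureReal_def, Real.volume_Ioc, sub_zero, ENNReal.toReal_ofReal hc.le, smul_eq_mul]
    have hid_ρ : Integrable (fun x : ℝ => x) ρ := hintρ continuous_id
    have hsubm_ρ : Integrable (fun x : ℝ => x - m) ρ := hintρ (continuous_id.sub continuous_const)
    have hminm_ρ : Integrable (fun x : ℝ => min (x - m) 0) ρ :=
      hintρ ((continuous_id.sub continuous_const).min continuous_const)
    have hxm : ∫ x, (x - m) ∂ρ = (∫ x, x ∂ρ) - c * m := by
      rw [integral_sub hid_ρ (integrable_const m), integral_const, measureReal_def, hρuniv, smul_eq_mul]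
    have hmin_le : ∫ x, min (x - m) 0 ∂ρ ≤ ∫ x, (x - m) ∂ρ :=
      integral_mono hminm_ρ hsubm_ρ (fun x => min_le_left _ _)
    have := hmono_meas
    rw [htrans, hsplit, hright, hleft, add_zero, ← hIocIoo, hsub_int] at this
    linarith [hmin_le, hxm.ge, this]
  -- upper bound: ∫ x ∂ρ ≤ ∫_{Ico (1-c) 1} q
  have hupp : ∫ x, x ∂ρ ≤ ∫ u in Set.Ico (1-c) (1:ℝ), q u := by
    set m : ℝ := q (1 - c) with hm
    have hmono_meas : ∫ x, max (x - m) 0 ∂ρ ≤ ∫ x, max (x - m) 0 ∂μ :=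
      integral_mono_measure hρle
        (Filter.Eventually.of_forall (fun x => le_max_right _ _))
        (hintμ ((continuous_id.sub continuous_const).max continuous_const))
    have hmaxq_meas : Measurable (fun u => max (q u - m) 0) :=
      (hqmeas.sub measurable_const).max measurable_const
    have hmaxq_bdd : ∀ u, |max (q u - m) 0| ≤ M + |m| := fun u =>
      (habs_max _).trans ((abs_sub (q u) m).trans (by linarith [hqb u]))
    have htrans : ∫ x, max (x - m) 0 ∂μ = ∫ u in Set.Ioo (0:ℝ) 1, max (q u - m) 0 :=
      integral_qExt hyLU hsuppμ ((continuous_id.sub continuous_const).max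
        continuous_const).measurable
    have hsplitset : Set.Ioo (0:ℝ) 1 = Set.Ioc 0 (1-c) ∪ Set.Ioo (1-c) 1 :=
      (Set.Ioc_union_Ioo_eq_Ioo (by linarith) (by linarith)).symm
    have hdisj : Disjoint (Set.Ioc (0:ℝ) (1-c)) (Set.Ioo (1-c) 1) :=
      Set.disjoint_left.2 (fun u hu hu' => absurd hu'.1 (not_lt.2 hu.2))
    have hsplit : ∫ u in Set.Ioo (0:ℝ) 1, max (q u - m) 0
        = (∫ u in Set.Ioc (0:ℝ) (1-c), max (q u - m) 0)
          + ∫ u in Set.Ioo (1-c) (1:ℝ), max (q u - m) 0 := by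
      rw [hsplitset]
      exact setIntegral_union hdisj measurableSet_Ioo
        (integrableOn_of_bdd hmaxq_meas hmaxq_bdd (hIoc_ne _ _))
        (integrableOn_of_bdd hmaxq_meas hmaxq_bdd (hIoo_ne _ _))
    have hleft : ∫ u in Set.Ioc (0:ℝ) (1-c), max (q u - m) 0 = 0 := by
      rw [setIntegral_congr_fun measurableSet_Ioc
        (fun u hu => max_eq_right (sub_nonpos.2 (hqmono hu.2)) : Set.EqOn _ (fun _ => (0:ℝ)) _)]
      simp
    have hright : ∫ u in Set.Ioo (1-c) (1:ℝ), max (q u - m) 0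
        = ∫ u in Set.Ioo (1-c) (1:ℝ), (q u - m) := by
      refine setIntegral_congr_fun measurableSet_Ioo (fun u hu => ?_)
      exact max_eq_left (sub_nonneg.2 (hqmono hu.1.le))
    have hIcoIoo : ∫ u in Set.Ico (1-c) (1:ℝ), (q u - m) = ∫ u in Set.Ioo (1-c) (1:ℝ), (q u - m) :=
      integral_Ico_eq_integral_Ioo
    have hsub_int : ∫ u in Set.Ico (1-c) (1:ℝ), (q u - m)
        = (∫ u in Set.Ico (1-c) (1:ℝ), q u) - c * m := by
      rw [integral_sub (integrableOn_of_bdd hqmeas hqb (hIco_ne _ _))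
        (integrableOn_of_bdd measurable_const (fun _ => le_refl |m|) (hIco_ne _ _))]
      rw [setIntegral_const, measureReal_def, Real.volume_Ico, show (1:ℝ) - (1-c) = c by ring,
        ENNReal.toReal_ofReal hc.le, smul_eq_mul]
    have hid_ρ : Integrable (fun x : ℝ => x) ρ := hintρ continuous_id
    have hsubm_ρ : Integrable (fun x : ℝ => x - m) ρ := hintρ (continuous_id.sub continuous_const)
    have hmaxm_ρ : Integrable (fun x : ℝ => max (x - m) 0) ρ :=
      hintρ ((continuous_id.sub continuous_const).max continuous_const)
    have hxm : ∫ x, (x - m) ∂ρ = (∫ x, x ∂ρ) - c * m := by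
      rw [integral_sub hid_ρ (integrable_const m), integral_const, measureReal_def, hρuniv, smul_eq_mul]
    have hle_max : ∫ x, (x - m) ∂ρ ≤ ∫ x, max (x - m) 0 ∂ρ :=
      integral_mono hsubm_ρ hmaxm_ρ (fun x => le_max_left _ _)
    have h := hmono_meas
    rw [htrans, hsplit, hleft, hright, zero_add, ← hIcoIoo, hsub_int] at h
    linarith [hle_max, hxm]
  -- monotonicity in γ (lower)
  have hmono_low : γ⁻¹ * (∫ u in Set.Ioc (0:ℝ) γ, q u) ≤ c⁻¹ * ∫ u in Set.Ioc (0:ℝ) c, q u := by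
    have hsplitset : Set.Ioc (0:ℝ) c = Set.Ioc 0 γ ∪ Set.Ioc γ c :=
      (Set.Ioc_union_Ioc_eq_Ioc hγ.le hγc).symm
    have hdisj : Disjoint (Set.Ioc (0:ℝ) γ) (Set.Ioc γ c) :=
      Set.disjoint_left.2 (fun u hu hu' => absurd hu'.1 (not_lt.2 hu.2))
    have hsplit : ∫ u in Set.Ioc (0:ℝ) c, q u
        = (∫ u in Set.Ioc (0:ℝ) γ, q u) + ∫ u in Set.Ioc γ c, q u := by
      rw [hsplitset]
      exact setIntegral_union hdisj measurableSet_Ioc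
        (integrableOn_of_bdd hqmeas hqb (hIoc_ne _ _))
        (integrableOn_of_bdd hqmeas hqb (hIoc_ne _ _))
    have hA : ∫ u in Set.Ioc (0:ℝ) γ, q u ≤ γ * q γ := by
      have := setIntegral_mono_on (s := Set.Ioc (0:ℝ) γ) (integrableOn_of_bdd hqmeas hqb (hIoc_ne _ _))
        (integrableOn_of_bdd measurable_const (fun _ => le_refl |q γ|) (hIoc_ne _ _))
        measurableSet_Ioc (fun u hu => hqmono hu.2)
      rwa [setIntegral_const, measureReal_def, Real.volume_Ioc, sub_zero, ENNReal.toReal_ofReal hγ.le,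
        smul_eq_mul] at this
    have hB : (c - γ) * q γ ≤ ∫ u in Set.Ioc γ c, q u := by
      have := setIntegral_mono_on (s := Set.Ioc γ c)
        (integrableOn_of_bdd measurable_const (fun _ => le_refl |q γ|) (hIoc_ne _ _))
        (integrableOn_of_bdd hqmeas hqb (hIoc_ne _ _))
        measurableSet_Ioc (fun u hu => hqmono hu.1.le)
      rwa [setIntegral_const, measureReal_def, Real.volume_Ioc, ENNReal.toReal_ofReal (by linarith),
        smul_eq_mul] at this
    rw [hsplit, inv_mul_eq_div, inv_mul_eq_div, div_le_div_iff₀ hγ hc]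
    nlinarith [hA, hB, mul_le_mul_of_nonneg_left hA (sub_nonneg.2 hγc)]
  -- monotonicity in γ (upper)
  have hmono_upp : c⁻¹ * (∫ u in Set.Ico (1-c) (1:ℝ), q u)
      ≤ γ⁻¹ * ∫ u in Set.Ico (1-γ) (1:ℝ), q u := by
    have hsplitset : Set.Ico (1-c) (1:ℝ) = Set.Ico (1-c) (1-γ) ∪ Set.Ico (1-γ) 1 :=
      (Set.Ico_union_Ico_eq_Ico (by linarith) (by linarith)).symm
    have hdisj : Disjoint (Set.Ico (1-c) (1-γ)) (Set.Ico (1-γ) (1:ℝ)) :=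
      Set.disjoint_left.2 (fun u hu hu' => absurd hu'.1 (not_le.2 hu.2))
    have hsplit : ∫ u in Set.Ico (1-c) (1:ℝ), q u
        = (∫ u in Set.Ico (1-c) (1-γ), q u) + ∫ u in Set.Ico (1-γ) (1:ℝ), q u := by
      rw [hsplitset]
      exact setIntegral_union hdisj measurableSet_Ico
        (integrableOn_of_bdd hqmeas hqb (hIco_ne _ _))
        (integrableOn_of_bdd hqmeas hqb (hIco_ne _ _))
    have hB : ∫ u in Set.Ico (1-c) (1-γ), q u ≤ (c - γ) * q (1-γ) := by
      have := setIntegral_mono_on (s := Set.Ico (1-c) (1-γ)) (integrableOn_of_bdd hqmeas hqb (hIco_ne _ _))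
        (integrableOn_of_bdd measurable_const (fun _ => le_refl |q (1-γ)|) (hIco_ne _ _))
        measurableSet_Ico (fun u hu => hqmono hu.2.le)
      rwa [setIntegral_const, measureReal_def, Real.volume_Ico, show (1:ℝ) - γ - (1-c) = c - γ by ring,
        ENNReal.toReal_ofReal (by linarith), smul_eq_mul] at this
    have hA : γ * q (1-γ) ≤ ∫ u in Set.Ico (1-γ) (1:ℝ), q u := by
      have := setIntegral_mono_on (s := Set.Ico (1-γ) (1:ℝ))
        (integrableOn_of_bdd measurable_const (fun _ => le_refl |q (1-γ)|) (hIco_ne _ _))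
        (integrableOn_of_bdd hqmeas hqb (hIco_ne _ _))
        measurableSet_Ico (fun u hu => hqmono hu.1)
      rwa [setIntegral_const, measureReal_def, Real.volume_Ico, show (1:ℝ) - (1-γ) = γ by ring,
        ENNReal.toReal_ofReal hγ.le, smul_eq_mul] at this
    rw [hsplit, inv_mul_eq_div, inv_mul_eq_div, div_le_div_iff₀ hc hγ]
    nlinarith [hA, hB, mul_le_mul_of_nonneg_left hB hγ.le]
  -- identify quantileFn with q on the integration domains
  have hcong_low : ∫ u in Set.Ioc (0:ℝ) γ, quantileFn (Fof μ) u = ∫ u in Set.Ioc (0:ℝ) γ, q u :=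
    setIntegral_congr_fun measurableSet_Ioc
      (fun u hu => (qExt_eq hu.1 (hu.2.trans hγ1)).symm)
  have hcong_upp : ∫ u in Set.Ico (1-γ) (1:ℝ), quantileFn (Fof μ) u
      = ∫ u in Set.Ico (1-γ) (1:ℝ), q u := by
    refine setIntegral_congr_ae measurableSet_Ico ?_
    have h0 : ∀ᵐ u : ℝ, u ≠ 0 := by
      rw [ae_iff]
      simpa [Set.compl_def] using Real.volume_singleton (a := (0:ℝ))
    filter_upwards [h0] with u hu0 hu
    have hupos : 0 < u := lt_of_le_of_ne (by linarith [hu.1]) (Ne.symm hu0)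
    exact (qExt_eq hupos hu.2.le).symm
  constructor
  · calc γ⁻¹ * (∫ u in Set.Ioc (0:ℝ) γ, quantileFn (Fof μ) u)
        = γ⁻¹ * ∫ u in Set.Ioc (0:ℝ) γ, q u := by rw [hcong_low]
      _ ≤ c⁻¹ * ∫ u in Set.Ioc (0:ℝ) c, q u := hmono_low
      _ ≤ c⁻¹ * ∫ x, x ∂ρ := by
          exact mul_le_mul_of_nonneg_left hlow (inv_nonneg.2 hc.le)
      _ = ∫ x, x ∂ν := by rw [hρint]; field_simp
  · calc ∫ x, x ∂ν = c⁻¹ * ∫ x, x ∂ρ := by rw [hρint]; field_simp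
      _ ≤ c⁻¹ * ∫ u in Set.Ico (1-c) (1:ℝ), q u :=
          mul_le_mul_of_nonneg_left hupp (inv_nonneg.2 hc.le)
      _ ≤ γ⁻¹ * ∫ u in Set.Ico (1-γ) (1:ℝ), q u := hmono_upp
      _ = γ⁻¹ * ∫ u in Set.Ico (1-γ) (1:ℝ), quantileFn (Fof μ) u := by rw [hcong_upp]

lemma integrable_cond {Ω : Type*} [MeasurableSpace Ω] {P : Measure Ω} [IsFiniteMeasure P]
    {f : Ω → ℝ} (hf : Integrable f P) {s : Set Ω} (hs : P s ≠ 0) : Integrable f (P[|s]) := by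
  unfold ProbabilityTheory.cond
  exact (hf.restrict).smul_measure (ENNReal.inv_ne_top.2 hs)

lemma ae_cond {Ω : Type*} [MeasurableSpace Ω] {P : Measure Ω} {p : Ω → Prop}
    (h : ∀ᵐ ω ∂P, p ω) (s : Set Ω) : ∀ᵐ ω ∂(P[|s]), p ω :=
  h.filter_mono (ProbabilityTheory.cond_absolutelyContinuous (μ := P) (s := s)).ae_le

/-- Core probabilistic bound for one experimental arm. -/
lemma arm_bound {Ω : Type*} [MeasurableSpace Ω] (P : Measure Ω) [IsProbabilityMeasure P]
    (V : Ω → ℝ) (hV : Measurable V)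
    (A Zev Tev : Set Ω) (hA : MeasurableSet A) (hZev : MeasurableSet Zev)
    (hTev : MeasurableSet Tev) (hTA : Tev ⊆ A)
    (hind : ∀ B : Set ℝ, MeasurableSet B → P (V ⁻¹' B ∩ A ∩ Zev) = P (V ⁻¹' B ∩ A) * P Zev)
    (hZpos : P Zev ≠ 0) (hAZpos : P (A ∩ Zev) ≠ 0) (hTpos : P Tev ≠ 0)
    {yL yU : ℝ} (hyLU : yL ≤ yU) (hVbdd : ∀ᵐ ω ∂P, V ω ∈ Set.Icc yL yU)
    {γ : ℝ} (hγ : 0 < γ) (hγc : γ ≤ (P Tev).toReal / (P A).toReal) :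
    γ⁻¹ * (∫ u in Set.Ioc (0:ℝ) γ, quantileFn (Fof (Measure.map V (P[|A ∩ Zev]))) u)
        ≤ ∫ ω, V ω ∂(P[|Tev]) ∧
    ∫ ω, V ω ∂(P[|Tev])
        ≤ γ⁻¹ * ∫ u in Set.Ico (1-γ) (1:ℝ), quantileFn (Fof (Measure.map V (P[|A ∩ Zev]))) u := by
  have hPA : P A ≠ 0 := fun h0 => hAZpos (measure_mono_null Set.inter_subset_left h0)
  have hPAne : P A ≠ ⊤ := measure_ne_top _ _
  have hPTne : P Tev ≠ ⊤ := measure_ne_top _ _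
  have hPZne : P Zev ≠ ⊤ := measure_ne_top _ _
  haveI hμcP : IsProbabilityMeasure (P[|A ∩ Zev]) := cond_isProbabilityMeasure hAZpos
  haveI hνcP : IsProbabilityMeasure (P[|Tev]) := cond_isProbabilityMeasure hTpos
  set μm : Measure ℝ := Measure.map V (P[|A ∩ Zev]) with hμm
  set νm : Measure ℝ := Measure.map V (P[|Tev]) with hνm
  haveI : IsProbabilityMeasure μm := Measure.isProbabilityMeasure_map hV.aemeasurable
  haveI : IsProbabilityMeasure νm := Measure.isProbabilityMeasure_map hV.aemeasurable
  -- μm B = P (V⁻¹ B ∩ A) * (P A)⁻¹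
  have hμmB : ∀ B : Set ℝ, MeasurableSet B → μm B = P (V ⁻¹' B ∩ A) * (P A)⁻¹ := by
    intro B hB
    rw [hμm, Measure.map_apply hV hB, cond_apply (hA.inter hZev)]
    have hAZ : P (A ∩ Zev) = P A * P Zev := by
      have := hind Set.univ MeasurableSet.univ
      simpa using this
    have hVAZ : P ((A ∩ Zev) ∩ V ⁻¹' B) = P (V ⁻¹' B ∩ A) * P Zev := by
      rw [show (A ∩ Zev) ∩ V ⁻¹' B = V ⁻¹' B ∩ A ∩ Zev by
        rw [Set.inter_comm (V ⁻¹' B) A]; ac_rfl]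
      exact hind B hB
    rw [hAZ, hVAZ, ENNReal.mul_inv (Or.inl hPA) (Or.inl hPAne)]
    calc (P A)⁻¹ * (P Zev)⁻¹ * (P (V ⁻¹' B ∩ A) * P Zev)
        = P (V ⁻¹' B ∩ A) * (P A)⁻¹ * ((P Zev)⁻¹ * P Zev) := by ring
      _ = P (V ⁻¹' B ∩ A) * (P A)⁻¹ := by
          rw [ENNReal.inv_mul_cancel hZpos hPZne, mul_one]
  -- sub-probability comparison
  set c : ℝ := (P Tev).toReal / (P A).toReal with hcdef
  have hPAtR : 0 < (P A).toReal := ENNReal.toReal_pos hPA hPAne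
  have hofc : ENNReal.ofReal c = P Tev * (P A)⁻¹ := by
    rw [hcdef, ENNReal.ofReal_div_of_pos hPAtR, ENNReal.ofReal_toReal hPTne,
      ENNReal.ofReal_toReal hPAne, div_eq_mul_inv]
  have hsub : ∀ s : Set ℝ, MeasurableSet s → ENNReal.ofReal c * νm s ≤ μm s := by
    intro B hB
    rw [hμmB B hB, hνm, Measure.map_apply hV hB, cond_apply hTev, hofc]
    calc P Tev * (P A)⁻¹ * ((P Tev)⁻¹ * P (Tev ∩ V ⁻¹' B))
        = (P A)⁻¹ * P (Tev ∩ V ⁻¹' B) * (P Tev * (P Tev)⁻¹) := by ring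
      _ = (P A)⁻¹ * P (Tev ∩ V ⁻¹' B) := by
          rw [ENNReal.mul_inv_cancel hTpos hPTne, mul_one]
      _ ≤ (P A)⁻¹ * P (V ⁻¹' B ∩ A) := by
          refine mul_le_mul_right (measure_mono ?_) _
          rintro ω ⟨h1, h2⟩
          exact ⟨h2, hTA h1⟩
      _ = P (V ⁻¹' B ∩ A) * (P A)⁻¹ := mul_comm _ _
  -- supports
  have hsuppμm : μm (Set.Icc yL yU)ᶜ = 0 := by
    rw [hμm, Measure.map_apply hV measurableSet_Icc.compl]
    have := ae_cond hVbdd (A ∩ Zev)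
    rwa [ae_iff] at this
  have hsuppνm : νm (Set.Icc yL yU)ᶜ = 0 := by
    rw [hνm, Measure.map_apply hV measurableSet_Icc.compl]
    have := ae_cond hVbdd Tev
    rwa [ae_iff] at this
  have hres := trim_bounds hyLU hsuppμm hsuppνm hγ hγc hsub
  have hVint : ∫ x, x ∂νm = ∫ ω, V ω ∂(P[|Tev]) :=
    integral_map hV.aemeasurable aestronglyMeasurable_id
  rw [hVint] at hres
  exact hres

lemma Yreal_eq {Ω : Type*} (K : ℕ) (Z D0 D1 : Ω → ℕ) (Y : ℕ → ℕ → Ω → ℝ)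
    {z d : ℕ} (hz : z ≤ 1) (hd1 : 1 ≤ d) (hdK : d ≤ K) (ω : Ω)
    (hZ : Z ω = z) (hD : Dreal Z D0 D1 ω = d) : Yreal K Z D0 D1 Y ω = Y z d ω := by
  unfold Yreal
  rw [Finset.sum_eq_single d]
  · rw [if_pos hD, hZ]
    rcases Nat.le_one_iff_eq_zero_or_eq_one.1 hz with rfl | rfl <;> norm_num
  · intro e he hne
    rw [if_neg (by rw [hD]; exact fun h => hne h.symm), mul_zero]
  · intro hd
    exact absurd (Finset.mem_Icc.2 ⟨hd1, hdK⟩) hd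

lemma switcher_arm {Ω : Type*} [MeasurableSpace Ω] (P : Measure Ω) [IsProbabilityMeasure P]
    (K : ℕ) (Z D0 D1 : Ω → ℕ) (Y : ℕ → ℕ → Ω → ℝ) (z d : ℕ) (Dz : Ω → ℕ)
    (hYmz : Measurable (Y z d))
    (hZev : MeasurableSet {ω | Z ω = z}) (hDzm : MeasurableSet {ω | Dz ω = d})
    (Tev : Set Ω) (hTev : MeasurableSet Tev) (hTA : Tev ⊆ {ω | Dz ω = d}) (hTpos : P Tev ≠ 0)
    (hPZz : P {ω | Z ω = z} ≠ 0)
    (hprop : 0 < propScore P Z D0 D1 d z)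
    (hDreal : ∀ ω, Z ω = z → Dreal Z D0 D1 ω = Dz ω)
    (hYD : ∀ ω, Z ω = z → Dz ω = d → Yreal K Z D0 D1 Y ω = Y z d ω)
    (hind : ∀ B : Set ℝ, MeasurableSet B →
      P (Y z d ⁻¹' B ∩ {ω | Dz ω = d} ∩ {ω | Z ω = z})
        = P (Y z d ⁻¹' B ∩ {ω | Dz ω = d}) * P {ω | Z ω = z})
    {yL yU : ℝ} (hyLU : yL ≤ yU) (hVbdd : ∀ᵐ ω ∂P, Y z d ω ∈ Set.Icc yL yU)
    {γ : ℝ} (hγ : 0 < γ) (hγle : γ ≤ (P Tev).toReal / propScore P Z D0 D1 d z) :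
    lowerTrunc (FYcond P K Z D0 D1 Y d z) γ ≤ ∫ ω, Y z d ω ∂(P[|Tev]) ∧
    ∫ ω, Y z d ω ∂(P[|Tev]) ≤ upperTrunc (FYcond P K Z D0 D1 Y d z) γ := by
  set A := {ω | Dz ω = d} with hAdef
  set Zev := {ω | Z ω = z} with hZdef
  have hAZ_eq : {ω | Dreal Z D0 D1 ω = d ∧ Z ω = z} = A ∩ Zev := by
    ext ω
    simp only [Set.mem_setOf_eq, Set.mem_inter_iff, hAdef, hZdef]
    constructor
    · rintro ⟨h1, h2⟩; exact ⟨by rw [← hDreal ω h2]; exact h1, h2⟩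
    · rintro ⟨h1, h2⟩; exact ⟨by rw [hDreal ω h2]; exact h1, h2⟩
  have hPAZ : P (A ∩ Zev) = P A * P Zev := by simpa using hind Set.univ MeasurableSet.univ
  have hZD : Zev ∩ {ω | Dreal Z D0 D1 ω = d} = A ∩ Zev := by
    ext ω
    simp only [Set.mem_setOf_eq, Set.mem_inter_iff, hAdef, hZdef]
    constructor
    · rintro ⟨h2, h1⟩; exact ⟨by rw [← hDreal ω h2]; exact h1, h2⟩
    · rintro ⟨h1, h2⟩; exact ⟨h2, by rw [hDreal ω h2]; exact h1⟩
  have prop_eq : propScore P Z D0 D1 d z = (P A).toReal := by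
    unfold propScore
    rw [cond_apply hZev, hZD, hPAZ,
      show (P Zev)⁻¹ * (P A * P Zev) = P A * ((P Zev)⁻¹ * P Zev) by ring,
      ENNReal.inv_mul_cancel hPZz (measure_ne_top _ _), mul_one]
  have hPA0 : P A ≠ 0 := by
    intro h
    rw [prop_eq, h] at hprop
    simp at hprop
  have hAZpos : P (A ∩ Zev) ≠ 0 := by
    rw [hPAZ]; exact mul_ne_zero hPA0 hPZz
  have harm := arm_bound P (Y z d) hYmz A Zev Tev hDzm hZev hTev hTA hind hPZz hAZpos hTpos
    hyLU hVbdd hγ (by rwa [prop_eq] at hγle)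
  have hFY : FYcond P K Z D0 D1 Y d z = Fof (Measure.map (Y z d) (P[|A ∩ Zev])) := by
    funext t
    unfold FYcond cdfOf Fof
    rw [hAZ_eq, Measure.map_apply hYmz measurableSet_Iic]
    have hset : (A ∩ Zev) ∩ {ω | Yreal K Z D0 D1 Y ω ≤ t}
        = (A ∩ Zev) ∩ (Y z d ⁻¹' Set.Iic t) := by
      ext ω
      simp only [Set.mem_inter_iff, Set.mem_setOf_eq, Set.mem_preimage, Set.mem_Iic,
        hAdef, hZdef]
      constructor
      · rintro ⟨hA', hY'⟩; exact ⟨hA', by rwa [hYD ω hA'.2 hA'.1] at hY'⟩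
      · rintro ⟨hA', hY'⟩; exact ⟨hA', by rwa [hYD ω hA'.2 hA'.1]⟩
    rw [cond_apply (hDzm.inter hZev), cond_apply (hDzm.inter hZev), hset]
  unfold lowerTrunc upperTrunc
  rw [hFY]
  exact harm


lemma rct_ind {Ω : Type*} [MeasurableSpace Ω] {P : Measure Ω} {K : ℕ} {Y : ℕ → ℕ → Ω → ℝ}
    {D0 D1 Z : Ω → ℕ} (hRCT : RCT P K Y D0 D1 Z) {z d : ℕ} (hz : z ≤ 1) (hd1 : 1 ≤ d)
    (hdK : d ≤ K) {A : Set Ω}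
    (hAcm : MeasurableSet[MeasurableSpace.comap D0 inferInstance ⊔
      MeasurableSpace.comap D1 inferInstance] A) (zz : ℕ) :
    ∀ B : Set ℝ, MeasurableSet B →
      P (Y z d ⁻¹' B ∩ A ∩ {ω | Z ω = zz}) = P (Y z d ⁻¹' B ∩ A) * P {ω | Z ω = zz} := by
  intro B hB
  have hzmem : z ∈ ({0, 1} : Set ℕ) := by
    rcases Nat.le_one_iff_eq_zero_or_eq_one.1 hz with h | h
    · exact Or.inl h
    · exact Or.inr h
  have hdmem : d ∈ Set.Icc 1 K := ⟨hd1, hdK⟩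
  have hYle : MeasurableSpace.comap (Y z d) inferInstance ≤
      ⨆ z' ∈ ({0,1} : Set ℕ), ⨆ d' ∈ Set.Icc 1 K,
        MeasurableSpace.comap (Y z' d') inferInstance := by
    calc MeasurableSpace.comap (Y z d) inferInstance
        ≤ ⨆ d' ∈ Set.Icc 1 K, MeasurableSpace.comap (Y z d') inferInstance :=
          le_biSup (f := fun d' => MeasurableSpace.comap (Y z d') inferInstance) hdmem
      _ ≤ ⨆ z' ∈ ({0,1} : Set ℕ), ⨆ d' ∈ Set.Icc 1 K,
            MeasurableSpace.comap (Y z' d') inferInstance :=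
          le_biSup (fun z' => ⨆ d' ∈ Set.Icc 1 K,
            MeasurableSpace.comap (Y z' d') inferInstance) hzmem
  have hYM : MeasurableSpace.comap (Y z d) inferInstance ≤
      ((⨆ z' ∈ ({0,1} : Set ℕ), ⨆ d' ∈ Set.Icc 1 K,
        MeasurableSpace.comap (Y z' d') inferInstance)
        ⊔ MeasurableSpace.comap D0 inferInstance) ⊔ MeasurableSpace.comap D1 inferInstance :=
    hYle.trans (le_sup_left.trans le_sup_left)
  have hDM : (MeasurableSpace.comap D0 inferInstance ⊔ MeasurableSpace.comap D1 inferInstance) ≤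
      ((⨆ z' ∈ ({0,1} : Set ℕ), ⨆ d' ∈ Set.Icc 1 K,
        MeasurableSpace.comap (Y z' d') inferInstance)
        ⊔ MeasurableSpace.comap D0 inferInstance) ⊔ MeasurableSpace.comap D1 inferInstance :=
    sup_le (le_sup_right.trans le_sup_left) le_sup_right
  refine (Indep_iff _ _ _).1 hRCT _ _ ?_ ?_
  · exact MeasurableSet.inter (hYM _ ⟨B, hB, rfl⟩) (hDM _ hAcm)
  · exact ⟨{zz}, measurableSet_singleton zz, rfl⟩


end Aux

/-- validity of the multilayered bounds for switchers: under
Assumption RCT, if the true response-type probability vector lies in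
`Θ_I(R)` and the potential outcomes are supported in `[y_L, y_U]`, then the
local controlled direct effects for switcher types are bounded as stated. -/
theorem multilayered_bounds_switchers
    {Ω : Type*} [MeasurableSpace Ω] (P : Measure Ω) [IsProbabilityMeasure P]
    (K : ℕ) (hK : 1 ≤ K)
    (Z D0 D1 : Ω → ℕ)
    (hZm : Measurable Z) (hD0m : Measurable D0) (hD1m : Measurable D1)
    (hZ01 : ∀ ω, Z ω ≤ 1) (hD0K : ∀ ω, D0 ω ≤ K) (hD1K : ∀ ω, D1 ω ≤ K)
    (hZpos : 0 < P {ω | Z ω = 1}) (hZlt : P {ω | Z ω = 1} < 1)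
    (Y : ℕ → ℕ → Ω → ℝ)
    (hYm : ∀ z ≤ 1, ∀ d, 1 ≤ d → d ≤ K → Measurable (Y z d))
    (hYint : ∀ z ≤ 1, ∀ d, 1 ≤ d → d ≤ K → Integrable (Y z d) P)
    (hRCT : RCT P K Y D0 D1 Z)
    (R : (ℕ × ℕ → ℝ) → Prop)
    (hTrue : (fun t : ℕ × ℕ => (P {ω | D0 ω = t.1 ∧ D1 ω = t.2}).toReal)
        ∈ ThetaI P K Z D0 D1 R)
    (yL yU : ℝ) (hyLU : yL ≤ yU)
    (hBdd : ∀ z ≤ 1, ∀ d, 1 ≤ d → d ≤ K → ∀ᵐ ω ∂P, Y z d ω ∈ Set.Icc yL yU)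
    (d d' : ℕ) (hd1 : 1 ≤ d) (hdK : d ≤ K) (hd'1 : 1 ≤ d') (hd'K : d' ≤ K)
    (hdd' : d ≠ d')
    (hprop1 : 0 < propScore P Z D0 D1 d 1) (hprop0 : 0 < propScore P Z D0 D1 d 0) :
    ((0 < P {ω | D0 ω = d' ∧ D1 ω = d} →
        0 < pbar P K Z D0 D1 R (d', d) / propScore P Z D0 D1 d 1 →
      (lowerTrunc (FYcond P K Z D0 D1 Y d 1)
            (pbar P K Z D0 D1 R (d', d) / propScore P Z D0 D1 d 1) - yU
          ≤ ∫ ω, (Y 1 d ω - Y 0 d ω) ∂(P[|{ω | D0 ω = d' ∧ D1 ω = d}]))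
        ∧ (∫ ω, (Y 1 d ω - Y 0 d ω) ∂(P[|{ω | D0 ω = d' ∧ D1 ω = d}])
          ≤ upperTrunc (FYcond P K Z D0 D1 Y d 1)
              (pbar P K Z D0 D1 R (d', d) / propScore P Z D0 D1 d 1) - yL)))
    ∧ ((0 < P {ω | D0 ω = d ∧ D1 ω = d'} →
        0 < pbar P K Z D0 D1 R (d, d') / propScore P Z D0 D1 d 0 →
      (yL - upperTrunc (FYcond P K Z D0 D1 Y d 0)
            (pbar P K Z D0 D1 R (d, d') / propScore P Z D0 D1 d 0)
          ≤ ∫ ω, (Y 1 d ω - Y 0 d ω) ∂(P[|{ω | D0 ω = d ∧ D1 ω = d'}]))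
        ∧ (∫ ω, (Y 1 d ω - Y 0 d ω) ∂(P[|{ω | D0 ω = d ∧ D1 ω = d'}])
          ≤ yU - lowerTrunc (FYcond P K Z D0 D1 Y d 0)
              (pbar P K Z D0 D1 R (d, d') / propScore P Z D0 D1 d 0)))) := by
  have hZ1meas : MeasurableSet {ω | Z ω = 1} := hZm (measurableSet_singleton 1)
  have hPZ1 : P {ω | Z ω = 1} ≠ 0 := hZpos.ne'
  have hZ0c : {ω | Z ω = 0} = {ω | Z ω = 1}ᶜ := by
    ext ω
    simp only [Set.mem_setOf_eq, Set.mem_compl_iff]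
    have := hZ01 ω
    omega
  have hPZ0 : P {ω | Z ω = 0} ≠ 0 := by
    rw [hZ0c, prob_compl_eq_one_sub hZ1meas]
    intro h
    exact absurd (tsub_eq_zero_iff_le.1 h) (not_le.2 hZlt)
  have hpbar_le : ∀ t : ℕ × ℕ, t.1 ≤ K → t.2 ≤ K →
      pbar P K Z D0 D1 R t ≤ (P {ω | D0 ω = t.1 ∧ D1 ω = t.2}).toReal := by
    intro t h1 h2
    refine csInf_le ⟨0, ?_⟩ ⟨_, hTrue, rfl⟩
    rintro x ⟨p, hp, rfl⟩
    refine hp.1 t ?_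
    rw [Finset.mem_product]
    exact ⟨Finset.mem_range.2 (by omega), Finset.mem_range.2 (by omega)⟩
  constructor
  · -- part (a)
    intro hT hγ
    have hTev : MeasurableSet {ω | D0 ω = d' ∧ D1 ω = d} :=
      (hD0m (measurableSet_singleton d')).inter (hD1m (measurableSet_singleton d))
    have hTne : P {ω | D0 ω = d' ∧ D1 ω = d} ≠ 0 := hT.ne'
    have hple : pbar P K Z D0 D1 R (d', d) ≤ (P {ω | D0 ω = d' ∧ D1 ω = d}).toReal :=
      hpbar_le (d', d) hd'K hdK
    have hγle : pbar P K Z D0 D1 R (d', d) / propScore P Z D0 D1 d 1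
        ≤ (P {ω | D0 ω = d' ∧ D1 ω = d}).toReal / propScore P Z D0 D1 d 1 := by
      exact div_le_div_of_nonneg_right hple hprop1.le
    have hA1cm : MeasurableSet[MeasurableSpace.comap D0 inferInstance ⊔
        MeasurableSpace.comap D1 inferInstance] {ω | D1 ω = d} := by
      have hle : MeasurableSpace.comap D1 inferInstance ≤
          MeasurableSpace.comap D0 inferInstance ⊔ MeasurableSpace.comap D1 inferInstance :=
        le_sup_right
      exact hle _ ⟨{d}, measurableSet_singleton d, rfl⟩
    have harm := switcher_arm P K Z D0 D1 Y 1 d D1 (hYm 1 le_rfl d hd1 hdK) hZ1meas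
      (hD1m (measurableSet_singleton d)) {ω | D0 ω = d' ∧ D1 ω = d} hTev
      (fun ω h => h.2) hTne hPZ1 hprop1
      (fun ω h => by simp [Dreal, h])
      (fun ω h1 h2 => Yreal_eq K Z D0 D1 Y le_rfl hd1 hdK ω h1 (by simp [Dreal, h1, h2]))
      (rct_ind hRCT le_rfl hd1 hdK hA1cm 1) hyLU (hBdd 1 le_rfl d hd1 hdK) hγ hγle
    haveI : IsProbabilityMeasure (P[|{ω | D0 ω = d' ∧ D1 ω = d}]) :=
      cond_isProbabilityMeasure hTne
    have hint1 : Integrable (Y 1 d) (P[|{ω | D0 ω = d' ∧ D1 ω = d}]) :=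
      integrable_cond (hYint 1 le_rfl d hd1 hdK) hTne
    have hint0 : Integrable (Y 0 d) (P[|{ω | D0 ω = d' ∧ D1 ω = d}]) :=
      integrable_cond (hYint 0 (by norm_num) d hd1 hdK) hTne
    have hsubint : ∫ ω, (Y 1 d ω - Y 0 d ω) ∂(P[|{ω | D0 ω = d' ∧ D1 ω = d}])
        = (∫ ω, Y 1 d ω ∂(P[|{ω | D0 ω = d' ∧ D1 ω = d}]))
          - ∫ ω, Y 0 d ω ∂(P[|{ω | D0 ω = d' ∧ D1 ω = d}]) := integral_sub hint1 hint0
    have hae := ae_cond (hBdd 0 (by norm_num) d hd1 hdK) {ω | D0 ω = d' ∧ D1 ω = d}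
    have hY0l : yL ≤ ∫ ω, Y 0 d ω ∂(P[|{ω | D0 ω = d' ∧ D1 ω = d}]) := by
      have := integral_mono_ae (integrable_const yL) hint0 (hae.mono fun ω h => h.1)
      simpa using this
    have hY0u : ∫ ω, Y 0 d ω ∂(P[|{ω | D0 ω = d' ∧ D1 ω = d}]) ≤ yU := by
      have := integral_mono_ae hint0 (integrable_const yU) (hae.mono fun ω h => h.2)
      simpa using this
    constructor
    · rw [hsubint]; linarith [harm.1]
    · rw [hsubint]; linarith [harm.2]
  · -- part (b)
    intro hT hγ
    have hTev : MeasurableSet {ω | D0 ω = d ∧ D1 ω = d'} :=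
      (hD0m (measurableSet_singleton d)).inter (hD1m (measurableSet_singleton d'))
    have hTne : P {ω | D0 ω = d ∧ D1 ω = d'} ≠ 0 := hT.ne'
    have hple : pbar P K Z D0 D1 R (d, d') ≤ (P {ω | D0 ω = d ∧ D1 ω = d'}).toReal :=
      hpbar_le (d, d') hdK hd'K
    have hγle : pbar P K Z D0 D1 R (d, d') / propScore P Z D0 D1 d 0
        ≤ (P {ω | D0 ω = d ∧ D1 ω = d'}).toReal / propScore P Z D0 D1 d 0 := by
      exact div_le_div_of_nonneg_right hple hprop0.le
    have hZ0meas : MeasurableSet {ω | Z ω = 0} := hZm (measurableSet_singleton 0)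
    have hA0cm : MeasurableSet[MeasurableSpace.comap D0 inferInstance ⊔
        MeasurableSpace.comap D1 inferInstance] {ω | D0 ω = d} := by
      have hle : MeasurableSpace.comap D0 inferInstance ≤
          MeasurableSpace.comap D0 inferInstance ⊔ MeasurableSpace.comap D1 inferInstance :=
        le_sup_left
      exact hle _ ⟨{d}, measurableSet_singleton d, rfl⟩
    have harm := switcher_arm P K Z D0 D1 Y 0 d D0 (hYm 0 (by norm_num) d hd1 hdK) hZ0meas
      (hD0m (measurableSet_singleton d)) {ω | D0 ω = d ∧ D1 ω = d'} hTev
      (fun ω h => h.1) hTne hPZ0 hprop0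
      (fun ω h => by simp [Dreal, h])
      (fun ω h1 h2 => Yreal_eq K Z D0 D1 Y (by norm_num) hd1 hdK ω h1 (by simp [Dreal, h1, h2]))
      (rct_ind hRCT (by norm_num) hd1 hdK hA0cm 0) hyLU (hBdd 0 (by norm_num) d hd1 hdK) hγ hγle
    haveI : IsProbabilityMeasure (P[|{ω | D0 ω = d ∧ D1 ω = d'}]) :=
      cond_isProbabilityMeasure hTne
    have hint1 : Integrable (Y 1 d) (P[|{ω | D0 ω = d ∧ D1 ω = d'}]) :=
      integrable_cond (hYint 1 le_rfl d hd1 hdK) hTne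
    have hint0 : Integrable (Y 0 d) (P[|{ω | D0 ω = d ∧ D1 ω = d'}]) :=
      integrable_cond (hYint 0 (by norm_num) d hd1 hdK) hTne
    have hsubint : ∫ ω, (Y 1 d ω - Y 0 d ω) ∂(P[|{ω | D0 ω = d ∧ D1 ω = d'}])
        = (∫ ω, Y 1 d ω ∂(P[|{ω | D0 ω = d ∧ D1 ω = d'}]))
          - ∫ ω, Y 0 d ω ∂(P[|{ω | D0 ω = d ∧ D1 ω = d'}]) := integral_sub hint1 hint0
    have hae := ae_cond (hBdd 1 le_rfl d hd1 hdK) {ω | D0 ω = d ∧ D1 ω = d'}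
    have hY1l : yL ≤ ∫ ω, Y 1 d ω ∂(P[|{ω | D0 ω = d ∧ D1 ω = d'}]) := by
      have := integral_mono_ae (integrable_const yL) hint1 (hae.mono fun ω h => h.1)
      simpa using this
    have hY1u : ∫ ω, Y 1 d ω ∂(P[|{ω | D0 ω = d ∧ D1 ω = d'}]) ≤ yU := by
      have := integral_mono_ae hint1 (integrable_const yU) (hae.mono fun ω h => h.2)
      simpa using this
    constructor
    · rw [hsubint]; linarith [harm.2]
    · rw [hsubint]; linarith [harm.1]
end
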